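/- arXiv:2010.09146 — 2 statements merged into one kernel-verified Lean document; each statement's English description precedes it below -/
import Mathlib

section
/- Let Γ be a group, R a Γ-graded ring, and 𝒫 a gr-prime matrix ideal of R. Let A be an n×n matrix over R homogeneous of distribution (ᾱ, β̄) and let B be an n×n matrix over R homogeneous of distribution (β̄, δ̄). Then AB ∈ 𝒫 if and only if A ⊕ B ∈ 𝒫. -/
open Matrix

universe u v w

section GradedDefs

variable {Γ : Type u} [Group Γ] {R : Type v} [Ring R]

/-- `A` is a homogeneous matrix of distribution `(α, β)`:
its `(i,j)` entry lies in `𝒜 (α i * (β j)⁻¹)`. -/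
def IsHomog (𝒜 : Γ → AddSubgroup R) {m n : ℕ}
    (A : Matrix (Fin m) (Fin n) R) (α : Fin m → Γ) (β : Fin n → Γ) : Prop :=
  ∀ i j, A i j ∈ 𝒜 (α i * (β j)⁻¹)

/-- `A` is a homogeneous matrix for some distribution. -/
def IsHomogSq (𝒜 : Γ → AddSubgroup R) {m n : ℕ}
    (A : Matrix (Fin m) (Fin n) R) : Prop :=
  ∃ (α : Fin m → Γ) (β : Fin n → Γ), IsHomog 𝒜 A α β

end GradedDefs

/-- Square matrices over `R` of arbitrary finite size. -/
abbrev SqMat (R : Type v) : Type v := Σ n : ℕ, Matrix (Fin n) (Fin n) R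

section GradedDefs

variable {Γ : Type u} [Group Γ] {R : Type v} [Ring R]

/-- Diagonal sum `A ⊕ B` of two (rectangular) matrices. -/
def diagSum {m n m' n' : ℕ} (A : Matrix (Fin m) (Fin n) R)
    (B : Matrix (Fin m') (Fin n') R) : Matrix (Fin (m + m')) (Fin (n + n')) R :=
  Matrix.reindex finSumFinEquiv finSumFinEquiv (Matrix.fromBlocks A 0 0 B)

/-- Block lower triangular matrix `[[A, 0], [C, B]]`. -/
def lowerBlockSum {n m : ℕ} (A : Matrix (Fin n) (Fin n) R) (B : Matrix (Fin m) (Fin m) R)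
    (C : Matrix (Fin m) (Fin n) R) : Matrix (Fin (n + m)) (Fin (n + m)) R :=
  Matrix.reindex finSumFinEquiv finSumFinEquiv (Matrix.fromBlocks A 0 C B)

/-- Block upper triangular matrix `[[A, C], [0, B]]` with rectangular blocks. -/
def upperBlockSum {m n m' n' : ℕ} (A : Matrix (Fin m) (Fin n) R)
    (B : Matrix (Fin m') (Fin n') R) (C : Matrix (Fin m) (Fin n') R) :
    Matrix (Fin (m + m')) (Fin (n + n')) R :=
  Matrix.reindex finSumFinEquiv finSumFinEquiv (Matrix.fromBlocks A C 0 B)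

/-- `C` is the determinantal sum of `A` and `B` with respect to some column or row:
`A` and `B` agree away from that column (row) and the distinguished column (row) of `C`
is the sum of the corresponding columns (rows) of `A` and `B`. -/
def IsDetSum {n : ℕ} (A B C : Matrix (Fin n) (Fin n) R) : Prop :=
  (∃ c : Fin n, (∀ i j, j ≠ c → A i j = B i j) ∧
      ∀ i j, C i j = if j = c then A i j + B i j else A i j) ∨
  (∃ r : Fin n, (∀ i j, i ≠ r → A i j = B i j) ∧
      ∀ i j, C i j = if i = r then A i j + B i j else A i j)

/-- `C` is the determinantal sum of the homogeneous matrices `A` and `B`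
(which have a common distribution). -/
def GrDetSum (𝒜 : Γ → AddSubgroup R) {n : ℕ} (A B C : Matrix (Fin n) (Fin n) R) : Prop :=
  (∃ α β : Fin n → Γ, IsHomog 𝒜 A α β ∧ IsHomog 𝒜 B α β) ∧ IsDetSum A B C

/-- A square homogeneous matrix `A` is gr-full if whenever `A = P * Q` with `P`
homogeneous of distribution `(α, lam)` and `Q` homogeneous of distribution `(lam, β)`
where `lam` has length `r`, then `r ≥ n`. -/
def IsGrFull (𝒜 : Γ → AddSubgroup R) {n : ℕ} (A : Matrix (Fin n) (Fin n) R) : Prop :=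
  ∀ (r : ℕ) (P : Matrix (Fin n) (Fin r) R) (Q : Matrix (Fin r) (Fin n) R)
    (α : Fin n → Γ) (lam : Fin r → Γ) (β : Fin n → Γ),
    IsHomog 𝒜 P α lam → IsHomog 𝒜 Q lam β → A = P * Q → n ≤ r

/-- gr-prime matrix ideal: a set of square homogeneous matrices satisfying (PM1)–(PM6). -/
structure IsGrPrimeMatrixIdeal (𝒜 : Γ → AddSubgroup R) (P : Set (SqMat R)) : Prop where
  subset_homog : ∀ p ∈ P, IsHomogSq 𝒜 p.2
  pm1 : ∀ {n : ℕ} (A : Matrix (Fin n) (Fin n) R),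
    IsHomogSq 𝒜 A → ¬ IsGrFull 𝒜 A → (⟨n, A⟩ : SqMat R) ∈ P
  pm2 : ∀ {n : ℕ} (A B C : Matrix (Fin n) (Fin n) R),
    (⟨n, A⟩ : SqMat R) ∈ P → (⟨n, B⟩ : SqMat R) ∈ P → GrDetSum 𝒜 A B C →
    (⟨n, C⟩ : SqMat R) ∈ P
  pm3 : ∀ {m n : ℕ} (A : Matrix (Fin m) (Fin m) R) (B : Matrix (Fin n) (Fin n) R),
    (⟨m, A⟩ : SqMat R) ∈ P → IsHomogSq 𝒜 B → (⟨m + n, diagSum A B⟩ : SqMat R) ∈ P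
  pm4 : ∀ {m n : ℕ} (A : Matrix (Fin m) (Fin m) R) (B : Matrix (Fin n) (Fin n) R),
    IsHomogSq 𝒜 A → IsHomogSq 𝒜 B → (⟨m + n, diagSum A B⟩ : SqMat R) ∈ P →
    (⟨m, A⟩ : SqMat R) ∈ P ∨ (⟨n, B⟩ : SqMat R) ∈ P
  pm5 : (⟨1, (1 : Matrix (Fin 1) (Fin 1) R)⟩ : SqMat R) ∉ P
  pm6 : ∀ {n : ℕ} (A : Matrix (Fin n) (Fin n) R) (e f : Equiv.Perm (Fin n)),
    (⟨n, A⟩ : SqMat R) ∈ P → (⟨n, A.submatrix ⇑e ⇑f⟩ : SqMat R) ∈ P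

/-- gr-matrix ideal: a set of square homogeneous matrices satisfying (I1)–(I5). -/
structure IsGrMatrixIdeal (𝒜 : Γ → AddSubgroup R) (I : Set (SqMat R)) : Prop where
  subset_homog : ∀ p ∈ I, IsHomogSq 𝒜 p.2
  i1 : ∀ {n : ℕ} (A : Matrix (Fin n) (Fin n) R),
    IsHomogSq 𝒜 A → ¬ IsGrFull 𝒜 A → (⟨n, A⟩ : SqMat R) ∈ I
  i2 : ∀ {n : ℕ} (A B C : Matrix (Fin n) (Fin n) R),
    (⟨n, A⟩ : SqMat R) ∈ I → (⟨n, B⟩ : SqMat R) ∈ I → GrDetSum 𝒜 A B C →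
    (⟨n, C⟩ : SqMat R) ∈ I
  i3 : ∀ {m n : ℕ} (A : Matrix (Fin m) (Fin m) R) (B : Matrix (Fin n) (Fin n) R),
    (⟨m, A⟩ : SqMat R) ∈ I → IsHomogSq 𝒜 B → (⟨m + n, diagSum A B⟩ : SqMat R) ∈ I
  i4 : ∀ {n : ℕ} (A : Matrix (Fin n) (Fin n) R) (e f : Equiv.Perm (Fin n)),
    (⟨n, A⟩ : SqMat R) ∈ I → (⟨n, A.submatrix ⇑e ⇑f⟩ : SqMat R) ∈ I
  i5 : ∀ {n : ℕ} (A : Matrix (Fin n) (Fin n) R),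
    (⟨n + 1, diagSum A (1 : Matrix (Fin 1) (Fin 1) R)⟩ : SqMat R) ∈ I →
    (⟨n, A⟩ : SqMat R) ∈ I

/-- The diagonal sum of `r` copies of `A`. -/
def diagIter {n : ℕ} (A : Matrix (Fin n) (Fin n) R) :
    (r : ℕ) → Matrix (Fin (n * r)) (Fin (n * r)) R
  | 0 => 0
  | r + 1 => diagSum (diagIter A r) A

/-- Iterated determinantal sums (with arbitrary bracketing) of elements of `W`. -/
inductive IsDetSumOf (𝒜 : Γ → AddSubgroup R) (W : Set (SqMat R)) : SqMat R → Prop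
  | base (p : SqMat R) (hp : p ∈ W) : IsDetSumOf 𝒜 W p
  | step {n : ℕ} (A B C : Matrix (Fin n) (Fin n) R)
      (hA : IsDetSumOf 𝒜 W ⟨n, A⟩) (hB : IsDetSumOf 𝒜 W ⟨n, B⟩)
      (h : GrDetSum 𝒜 A B C) : IsDetSumOf 𝒜 W ⟨n, C⟩

/-- The homogeneous rational closure of degree `γ`: entries `(j,i)` of inverses of matrices
`A^f` with `A ∈ Sig` homogeneous of distribution `(α, β)` and `β j * (α i)⁻¹ = γ`. -/
def RatCl (𝒜 : Γ → AddSubgroup R) {S : Type w} [Ring S] (Sig : Set (SqMat R)) (f : R →+* S)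
    (γ : Γ) : Set S :=
  {x | ∃ (n : ℕ) (A : Matrix (Fin n) (Fin n) R) (α β : Fin n → Γ) (i j : Fin n)
        (B : Matrix (Fin n) (Fin n) S),
      (⟨n, A⟩ : SqMat R) ∈ Sig ∧ IsHomog 𝒜 A α β ∧ β j * (α i)⁻¹ = γ ∧
      (A.map ⇑f) * B = 1 ∧ B * (A.map ⇑f) = 1 ∧ B j i = x}

/-- gr-lower semimultiplicative set of square homogeneous matrices. -/
def IsGrLowerSemimult (𝒜 : Γ → AddSubgroup R) (Sig : Set (SqMat R)) : Prop :=
  ((⟨1, (1 : Matrix (Fin 1) (Fin 1) R)⟩ : SqMat R) ∈ Sig) ∧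
  ∀ {n m : ℕ} (A : Matrix (Fin n) (Fin n) R) (B : Matrix (Fin m) (Fin m) R)
    (α β : Fin n → Γ) (α' β' : Fin m → Γ) (C : Matrix (Fin m) (Fin n) R),
    (⟨n, A⟩ : SqMat R) ∈ Sig → (⟨m, B⟩ : SqMat R) ∈ Sig →
    IsHomog 𝒜 A α β → IsHomog 𝒜 B α' β' → IsHomog 𝒜 C α' β →
    (⟨n + m, lowerBlockSum A B C⟩ : SqMat R) ∈ Sig

end GradedDefs

/-- A homomorphism of `Γ`-graded rings from `(R, 𝒜)` to a `Γ`-graded division ring. -/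
structure GrDivRingHom (Γ : Type u) [Group Γ] [DecidableEq Γ] (R : Type v) [Ring R]
    (𝒜 : Γ → AddSubgroup R) where
  K : Type (max u v)
  [ringK : Ring K]
  [nontrivialK : Nontrivial K]
  grading : Γ → AddSubgroup K
  internal : DirectSum.IsInternal grading
  one_mem : (1 : K) ∈ grading 1
  mul_mem : ∀ {γ δ : Γ} {x y : K}, x ∈ grading γ → y ∈ grading δ → x * y ∈ grading (γ * δ)
  isUnit_of_ne : ∀ {γ : Γ} {x : K}, x ∈ grading γ → x ≠ 0 → IsUnit x
  φ : R →+* K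
  map_mem : ∀ {γ : Γ} {r : R}, r ∈ 𝒜 γ → φ r ∈ grading γ

attribute [instance] GrDivRingHom.ringK GrDivRingHom.nontrivialK

set_option linter.unusedSectionVars false
set_option maxHeartbeats 1600000
namespace GrAux

variable {Γ : Type u} [Group Γ] {R : Type v} [Ring R]

/-- update column `j` to `v` -/
def updCol {I J : Type*} [DecidableEq J] (M : Matrix I J R) (j : J) (v : I → R) :
    Matrix I J R := fun k l => if l = j then v k else M k l

/-- add `v` to column `j` -/
def addCol {I J : Type*} [DecidableEq J] (M : Matrix I J R) (j : J) (v : I → R) :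
    Matrix I J R := fun k l => if l = j then M k l + v k else M k l

/-- generic reindexed block matrix -/
def bl {n m n' m' : ℕ} (X : Matrix (Fin n) (Fin n') R) (Y : Matrix (Fin n) (Fin m') R)
    (Z : Matrix (Fin m) (Fin n') R) (W : Matrix (Fin m) (Fin m') R) :
    Matrix (Fin (n + m)) (Fin (n' + m')) R :=
  Matrix.reindex finSumFinEquiv finSumFinEquiv (Matrix.fromBlocks X Y Z W)

def app2 {X : Sort*} {n m : ℕ} (a : Fin n → X) (b : Fin m → X) : Fin (n + m) → X :=
  fun i => Sum.elim a b (finSumFinEquiv.symm i)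

@[simp] lemma app2_castAdd {X : Sort*} {n m : ℕ} (a : Fin n → X) (b : Fin m → X) (x : Fin n) :
    app2 a b (Fin.castAdd m x) = a x := by simp [app2]

@[simp] lemma app2_natAdd {X : Sort*} {n m : ℕ} (a : Fin n → X) (b : Fin m → X) (x : Fin m) :
    app2 a b (Fin.natAdd n x) = b x := by simp [app2]

@[simp] lemma bl_cc {n m n' m' : ℕ} (X : Matrix (Fin n) (Fin n') R)
    (Y : Matrix (Fin n) (Fin m') R) (Z : Matrix (Fin m) (Fin n') R)
    (W : Matrix (Fin m) (Fin m') R) (i : Fin n) (j : Fin n') :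
    bl X Y Z W (Fin.castAdd m i) (Fin.castAdd m' j) = X i j := by
  simp [bl]

@[simp] lemma bl_cn {n m n' m' : ℕ} (X : Matrix (Fin n) (Fin n') R)
    (Y : Matrix (Fin n) (Fin m') R) (Z : Matrix (Fin m) (Fin n') R)
    (W : Matrix (Fin m) (Fin m') R) (i : Fin n) (j : Fin m') :
    bl X Y Z W (Fin.castAdd m i) (Fin.natAdd n' j) = Y i j := by
  simp [bl]

@[simp] lemma bl_nc {n m n' m' : ℕ} (X : Matrix (Fin n) (Fin n') R)
    (Y : Matrix (Fin n) (Fin m') R) (Z : Matrix (Fin m) (Fin n') R)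
    (W : Matrix (Fin m) (Fin m') R) (i : Fin m) (j : Fin n') :
    bl X Y Z W (Fin.natAdd n i) (Fin.castAdd m' j) = Z i j := by
  simp [bl]

@[simp] lemma bl_nn {n m n' m' : ℕ} (X : Matrix (Fin n) (Fin n') R)
    (Y : Matrix (Fin n) (Fin m') R) (Z : Matrix (Fin m) (Fin n') R)
    (W : Matrix (Fin m) (Fin m') R) (i : Fin m) (j : Fin m') :
    bl X Y Z W (Fin.natAdd n i) (Fin.natAdd n' j) = W i j := by
  simp [bl]

variable {𝒜 : Γ → AddSubgroup R}

lemma deg_cast {x : R} {γ γ' : Γ} (h : x ∈ 𝒜 γ) (e : γ = γ') : x ∈ 𝒜 γ' := e ▸ h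

lemma isHomog_zero {n m : ℕ} (a : Fin n → Γ) (b : Fin m → Γ) :
    IsHomog 𝒜 (0 : Matrix (Fin n) (Fin m) R) a b := fun _ _ => zero_mem _

lemma isHomog_one (hone : (1 : R) ∈ 𝒜 1) {k : ℕ} (γ : Fin k → Γ) :
    IsHomog 𝒜 (1 : Matrix (Fin k) (Fin k) R) γ γ := by
  intro i j
  by_cases h : i = j
  · subst h
    rw [Matrix.one_apply_eq]
    exact deg_cast hone (by group)
  · rw [Matrix.one_apply_ne h]; exact zero_mem _

lemma isHomog_neg {n m : ℕ} {M : Matrix (Fin n) (Fin m) R} {a b}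
    (h : IsHomog 𝒜 M a b) : IsHomog 𝒜 (-M) a b := fun i j => neg_mem (h i j)

lemma isHomog_mul (hmul : ∀ {γ δ : Γ} {x y : R}, x ∈ 𝒜 γ → y ∈ 𝒜 δ → x * y ∈ 𝒜 (γ * δ))
    {n m k : ℕ} {A : Matrix (Fin n) (Fin m) R} {B : Matrix (Fin m) (Fin k) R}
    {a b c} (hA : IsHomog 𝒜 A a b) (hB : IsHomog 𝒜 B b c) :
    IsHomog 𝒜 (A * B) a c := by
  intro i j
  rw [Matrix.mul_apply]
  exact sum_mem fun x _ => deg_cast (hmul (hA i x) (hB x j)) (by group)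

lemma isHomog_bl {n m n' m' : ℕ} {X : Matrix (Fin n) (Fin n') R}
    {Y : Matrix (Fin n) (Fin m') R} {Z : Matrix (Fin m) (Fin n') R}
    {W : Matrix (Fin m) (Fin m') R} {a b a' b'}
    (hX : IsHomog 𝒜 X a b) (hY : IsHomog 𝒜 Y a b') (hZ : IsHomog 𝒜 Z a' b)
    (hW : IsHomog 𝒜 W a' b') :
    IsHomog 𝒜 (bl X Y Z W) (app2 a a') (app2 b b') := by
  intro i j
  obtain ⟨si, rfl⟩ := finSumFinEquiv.surjective i
  obtain ⟨sj, rfl⟩ := finSumFinEquiv.surjective j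
  cases si <;> cases sj <;> simp <;> [exact hX _ _; exact hY _ _; exact hZ _ _; exact hW _ _]

lemma isHomog_updCol {N' N : ℕ} {M : Matrix (Fin N') (Fin N) R} {a : Fin N' → Γ}
    {b : Fin N → Γ}
    (hM : IsHomog 𝒜 M a b) (j : Fin N) {v : Fin N' → R}
    (hv : ∀ k, v k ∈ 𝒜 (a k * (b j)⁻¹)) : IsHomog 𝒜 (updCol M j v) a b := by
  intro k l
  by_cases hl : l = j
  · subst hl; simpa [updCol] using hv k
  · simpa [updCol, hl] using hM k l

lemma isHomog_addCol {N' N : ℕ} {M : Matrix (Fin N') (Fin N) R} {a : Fin N' → Γ}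
    {b : Fin N → Γ}
    (hM : IsHomog 𝒜 M a b) (j : Fin N) {v : Fin N' → R}
    (hv : ∀ k, v k ∈ 𝒜 (a k * (b j)⁻¹)) : IsHomog 𝒜 (addCol M j v) a b := by
  intro k l
  by_cases hl : l = j
  · subst hl; simpa [addCol] using add_mem (hM k l) (hv k)
  · simpa [addCol, hl] using hM k l


noncomputable def embE {N : ℕ} (j : Fin N) : Fin (N-1) ≃ {l : Fin N // l ≠ j} :=
  (Fintype.equivFinOfCardEq (by simp [Fintype.card_subtype_compl])).symm

noncomputable def embF {N : ℕ} (j : Fin N) (m : Fin (N-1)) : Fin N := (embE j m).1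

lemma embF_ne {N : ℕ} (j : Fin N) (m : Fin (N-1)) : embF j m ≠ j := (embE j m).2

lemma embF_inj {N : ℕ} (j : Fin N) : Function.Injective (embF j) :=
  fun x y h => (embE j).injective (Subtype.ext h)

lemma embF_surj {N : ℕ} (j l : Fin N) (hl : l ≠ j) : ∃ m, embF j m = l :=
  ⟨(embE j).symm ⟨l, hl⟩, by simp [embF]⟩

lemma sum_embF {M : Type*} [AddCommMonoid M] {N : ℕ} (j : Fin N) (f : Fin N → M) :
    ∑ i, f i = f j + ∑ m, f (embF j m) := by
  have h1 : ∑ m, f (embF j m) = ∑ x : {l : Fin N // l ≠ j}, f x.1 :=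
    Equiv.sum_comp (embE j) (fun x => f x.1)
  have h2 : ∑ x ∈ Finset.univ.erase j, f x = ∑ x : {l : Fin N // l ≠ j}, f x.1 :=
    Finset.sum_subtype _ (by simp) f
  rw [h1, ← h2, Finset.add_sum_erase _ f (Finset.mem_univ j)]

lemma sum_embF_ite {N : ℕ} (j l : Fin N) (hl : l ≠ j) (f : Fin N → R) :
    ∑ m, f (embF j m) * (if embF j m = l then 1 else 0) = f l := by
  obtain ⟨m₀, hm₀⟩ := embF_surj j l hl
  have key : ∀ m : Fin (N-1), f (embF j m) * (if embF j m = l then 1 else 0)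
      = if m = m₀ then f l else 0 := by
    intro m
    by_cases hm : m = m₀
    · subst hm; simp [hm₀]
    · have hne : embF j m ≠ l := fun h => hm (embF_inj j (h.trans hm₀.symm))
      simp [hne, hm]
  rw [Finset.sum_congr rfl fun m _ => key m, Finset.sum_ite_eq']
  simp

variable {P : Set (SqMat R)}

lemma smk {N : ℕ} {M M' : Matrix (Fin N) (Fin N) R} (h : M = M') :
    (⟨N, M⟩ : SqMat R) = ⟨N, M'⟩ := by rw [h]

lemma updCol_comb_mem (hone : (1:R) ∈ 𝒜 1)
    (hmul : ∀ {γ δ : Γ} {x y : R}, x ∈ 𝒜 γ → y ∈ 𝒜 δ → x * y ∈ 𝒜 (γ * δ))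
    (hP : IsGrPrimeMatrixIdeal 𝒜 P) {N : ℕ}
    (M : Matrix (Fin N) (Fin N) R) (a b : Fin N → Γ) (hM : IsHomog 𝒜 M a b)
    (j : Fin N) (c : Fin N → R) (hc : ∀ i, c i ∈ 𝒜 (b i * (b j)⁻¹)) (hcj : c j = 0) :
    (⟨N, updCol M j (fun k => ∑ i, M k i * c i)⟩ : SqMat R) ∈ P := by
  have hv : ∀ k, (∑ i, M k i * c i) ∈ 𝒜 (a k * (b j)⁻¹) :=
    fun k => sum_mem fun i _ => deg_cast (hmul (hM k i) (hc i)) (by group)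
  apply hP.pm1 _ ⟨a, b, isHomog_updCol hM j hv⟩
  intro hfull
  set P1 : Matrix (Fin N) (Fin (N-1)) R := fun k m => M k (embF j m) with hP1def
  set Q1 : Matrix (Fin (N-1)) (Fin N) R :=
    fun m l => if l = j then c (embF j m) else if embF j m = l then 1 else 0 with hQ1def
  have heq : updCol M j (fun k => ∑ i, M k i * c i) = P1 * Q1 := by
    ext k l
    rw [Matrix.mul_apply]
    by_cases hl : l = j
    · have key : ∀ m, P1 k m * Q1 m l = M k (embF j m) * c (embF j m) :=
        fun m => by simp [hP1def, hQ1def, hl]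
      rw [Finset.sum_congr rfl fun m _ => key m]
      simp only [updCol, if_pos hl]
      rw [sum_embF j (fun i => M k i * c i), hcj, mul_zero, zero_add]
    · have key : ∀ m, P1 k m * Q1 m l = M k (embF j m) * (if embF j m = l then 1 else 0) :=
        fun m => by simp [hP1def, hQ1def, hl]
      rw [Finset.sum_congr rfl fun m _ => key m, sum_embF_ite j l hl (M k)]
      simp [updCol, hl]
  have hQ1h : IsHomog 𝒜 Q1 (fun m => b (embF j m)) b := by
    intro m l
    by_cases hl : l = j
    · rw [hl]; simpa [hQ1def] using hc (embF j m)
    · by_cases he : embF j m = l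
      · have : Q1 m l = 1 := by simp [hQ1def, hl, he]
        rw [this, ← he]
        exact deg_cast hone (by group)
      · have : Q1 m l = 0 := by simp [hQ1def, hl, he]
        rw [this]; exact zero_mem _
  have hle := hfull (N-1) P1 Q1 a (fun m => b (embF j m)) b
    (fun k m => hM k (embF j m)) hQ1h heq
  have := j.pos
  omega

lemma add_col_iff (hP : IsGrPrimeMatrixIdeal 𝒜 P) {N : ℕ}
    (M : Matrix (Fin N) (Fin N) R) (a b : Fin N → Γ) (hM : IsHomog 𝒜 M a b)
    (j : Fin N) (v : Fin N → R) (hv : ∀ k, v k ∈ 𝒜 (a k * (b j)⁻¹))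
    (h1 : (⟨N, updCol M j v⟩ : SqMat R) ∈ P)
    (h2 : (⟨N, updCol M j (fun k => -(v k))⟩ : SqMat R) ∈ P) :
    ((⟨N, M⟩ : SqMat R) ∈ P ↔ (⟨N, addCol M j v⟩ : SqMat R) ∈ P) := by
  constructor
  · intro h
    refine hP.pm2 M (updCol M j v) (addCol M j v) h h1
      ⟨⟨a, b, hM, isHomog_updCol hM j hv⟩, Or.inl ⟨j, ?_, ?_⟩⟩
    · intro i l hl; simp [updCol, hl]
    · intro i l; by_cases hl : l = j <;> simp [addCol, updCol, hl]
  · intro h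
    refine hP.pm2 (addCol M j v) (updCol M j (fun k => -(v k))) M h h2
      ⟨⟨a, b, isHomog_addCol hM j hv, isHomog_updCol hM j (fun k => neg_mem (hv k))⟩,
        Or.inl ⟨j, ?_, ?_⟩⟩
    · intro i l hl; simp [updCol, addCol, hl]
    · intro i l; by_cases hl : l = j <;> simp [addCol, updCol, hl]

lemma comb_iff (hone : (1:R) ∈ 𝒜 1)
    (hmul : ∀ {γ δ : Γ} {x y : R}, x ∈ 𝒜 γ → y ∈ 𝒜 δ → x * y ∈ 𝒜 (γ * δ))
    (hP : IsGrPrimeMatrixIdeal 𝒜 P) {N : ℕ}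
    (M : Matrix (Fin N) (Fin N) R) (a b : Fin N → Γ) (hM : IsHomog 𝒜 M a b)
    (j : Fin N) (c : Fin N → R) (hc : ∀ i, c i ∈ 𝒜 (b i * (b j)⁻¹)) (hcj : c j = 0) :
    ((⟨N, M⟩ : SqMat R) ∈ P ↔
      (⟨N, addCol M j (fun k => ∑ i, M k i * c i)⟩ : SqMat R) ∈ P) := by
  have h1 := updCol_comb_mem hone hmul hP M a b hM j c hc hcj
  have h2 := updCol_comb_mem hone hmul hP M a b hM j (fun i => -(c i))
    (fun i => neg_mem (hc i)) (by simp [hcj])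
  have e2 : updCol M j (fun k => ∑ i, M k i * (fun i => -(c i)) i)
      = updCol M j (fun k => -(∑ i, M k i * c i)) := by
    funext k l; simp [updCol, mul_neg]
  rw [e2] at h2
  exact add_col_iff hP M a b hM j _
    (fun k => sum_mem fun i _ => deg_cast (hmul (hM k i) (hc i)) (by group)) h1 h2



@[simp] lemma castAdd_eq_castAdd {n m : ℕ} (y j : Fin n) :
    (Fin.castAdd m y = Fin.castAdd m j) ↔ y = j := Fin.castAdd_inj

@[simp] lemma natAdd_ne_castAdd {n m : ℕ} (y : Fin m) (j : Fin n) :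
    ¬ (Fin.natAdd n y = Fin.castAdd m j) := by
  simp only [Fin.ext_iff, Fin.coe_natAdd, Fin.coe_castAdd]
  omega

@[simp] lemma castAdd_ne_natAdd {n m : ℕ} (y : Fin n) (j : Fin m) :
    ¬ (Fin.castAdd m y = Fin.natAdd n j) := by
  simp only [Fin.ext_iff, Fin.coe_natAdd, Fin.coe_castAdd]
  omega

@[simp] lemma natAdd_eq_natAdd {n m : ℕ} (y j : Fin m) :
    (Fin.natAdd n y = Fin.natAdd n j) ↔ y = j := by
  simp only [Fin.ext_iff, Fin.coe_natAdd]
  omega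

lemma updCol_bl_inl {n m n' m' : ℕ} (X : Matrix (Fin n) (Fin n') R)
    (Y : Matrix (Fin n) (Fin m') R) (Z : Matrix (Fin m) (Fin n') R)
    (W : Matrix (Fin m) (Fin m') R) (j : Fin n') (v : Fin (n + m) → R) :
    updCol (bl X Y Z W) (Fin.castAdd m' j) v
      = bl (updCol X j (fun k => v (Fin.castAdd m k))) Y
           (updCol Z j (fun k => v (Fin.natAdd n k))) W := by
  ext i l
  obtain ⟨si, rfl⟩ := finSumFinEquiv.surjective i
  obtain ⟨sl, rfl⟩ := finSumFinEquiv.surjective l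
  cases si <;> cases sl <;> simp [updCol] <;>
    (try split) <;> simp_all

lemma addCol_bl_inl {n m n' m' : ℕ} (X : Matrix (Fin n) (Fin n') R)
    (Y : Matrix (Fin n) (Fin m') R) (Z : Matrix (Fin m) (Fin n') R)
    (W : Matrix (Fin m) (Fin m') R) (j : Fin n') (v : Fin (n + m) → R) :
    addCol (bl X Y Z W) (Fin.castAdd m' j) v
      = bl (addCol X j (fun k => v (Fin.castAdd m k))) Y
           (addCol Z j (fun k => v (Fin.natAdd n k))) W := by
  ext i l
  obtain ⟨si, rfl⟩ := finSumFinEquiv.surjective i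
  obtain ⟨sl, rfl⟩ := finSumFinEquiv.surjective l
  cases si <;> cases sl <;> simp [addCol] <;>
    (try split) <;> simp_all

lemma updCol_bl_inr {n m n' m' : ℕ} (X : Matrix (Fin n) (Fin n') R)
    (Y : Matrix (Fin n) (Fin m') R) (Z : Matrix (Fin m) (Fin n') R)
    (W : Matrix (Fin m) (Fin m') R) (j : Fin m') (v : Fin (n + m) → R) :
    updCol (bl X Y Z W) (Fin.natAdd n' j) v
      = bl X (updCol Y j (fun k => v (Fin.castAdd m k)))
           Z (updCol W j (fun k => v (Fin.natAdd n k))) := by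
  ext i l
  obtain ⟨si, rfl⟩ := finSumFinEquiv.surjective i
  obtain ⟨sl, rfl⟩ := finSumFinEquiv.surjective l
  cases si <;> cases sl <;> simp [updCol] <;>
    (try split) <;> simp_all

lemma addCol_bl_inr {n m n' m' : ℕ} (X : Matrix (Fin n) (Fin n') R)
    (Y : Matrix (Fin n) (Fin m') R) (Z : Matrix (Fin m) (Fin n') R)
    (W : Matrix (Fin m) (Fin m') R) (j : Fin m') (v : Fin (n + m) → R) :
    addCol (bl X Y Z W) (Fin.natAdd n' j) v
      = bl X (addCol Y j (fun k => v (Fin.castAdd m k)))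
           Z (addCol W j (fun k => v (Fin.natAdd n k))) := by
  ext i l
  obtain ⟨si, rfl⟩ := finSumFinEquiv.surjective i
  obtain ⟨sl, rfl⟩ := finSumFinEquiv.surjective l
  cases si <;> cases sl <;> simp [addCol] <;>
    (try split) <;> simp_all

lemma bl_as_submatrix {n m n' m' : ℕ} (X : Matrix (Fin n) (Fin n') R)
    (Y : Matrix (Fin n) (Fin m') R) (Z : Matrix (Fin m) (Fin n') R)
    (W : Matrix (Fin m) (Fin m') R) :
    bl X Y Z W = (Matrix.fromBlocks X Y Z W).submatrix
      finSumFinEquiv.symm finSumFinEquiv.symm := rfl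

lemma blockZeroCol_mem (hone : (1:R) ∈ 𝒜 1)
    (hmul : ∀ {γ δ : Γ} {x y : R}, x ∈ 𝒜 γ → y ∈ 𝒜 δ → x * y ∈ 𝒜 (γ * δ))
    (hP : IsGrPrimeMatrixIdeal 𝒜 P) {n m : ℕ}
    (X : Matrix (Fin n) (Fin n) R) (Z : Matrix (Fin m) (Fin n) R)
    (Y : Matrix (Fin m) (Fin m) R) (a b : Fin n → Γ) (b' d : Fin m → Γ)
    (hX : IsHomog 𝒜 X a b) (hZ : IsHomog 𝒜 Z b' b) (hY : IsHomog 𝒜 Y b' d)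
    (t : Fin n) (hXt : ∀ k, X k t = 0) :
    (⟨n + m, bl X 0 Z Y⟩ : SqMat R) ∈ P := by
  apply hP.pm1 _ ⟨app2 a b', app2 b d, isHomog_bl hX (isHomog_zero _ _) hZ hY⟩
  intro hfull
  set X1 : Matrix (Fin n) (Fin (n-1)) R := fun k m' => X k (embF t m') with hX1
  set Qinc : Matrix (Fin (n-1)) (Fin n) R := fun m' l => if embF t m' = l then 1 else 0 with hQ
  have hXQ : X1 * Qinc = X := by
    ext k l
    rw [Matrix.mul_apply]
    by_cases hl : l = t
    · rw [hl, hXt k]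
      refine Finset.sum_eq_zero fun m' _ => ?_
      simp [hX1, hQ, embF_ne t m']
    · have key : ∀ m', X1 k m' * Qinc m' l
          = X k (embF t m') * (if embF t m' = l then 1 else 0) := fun m' => by simp [hX1, hQ]
      rw [Finset.sum_congr rfl fun m' _ => key m', sum_embF_ite t l hl (X k)]
  have heq : bl X 0 Z Y = bl X1 0 0 (1 : Matrix (Fin m) (Fin m) R) * bl Qinc 0 Z Y := by
    rw [bl_as_submatrix X1, bl_as_submatrix Qinc,
      Matrix.submatrix_mul_equiv _ _ _ finSumFinEquiv.symm _,
      Matrix.fromBlocks_multiply]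
    simp [hXQ, bl_as_submatrix]
  have hQinc : IsHomog 𝒜 Qinc (fun m' => b (embF t m')) b := by
    intro m' l
    by_cases he : embF t m' = l
    · have : Qinc m' l = 1 := by simp [hQ, he]
      rw [this]
      exact deg_cast hone (by rw [← he]; group)
    · have : Qinc m' l = 0 := by simp [hQ, he]
      rw [this]; exact zero_mem _
  have hle := hfull ((n-1) + m) _ _ (app2 a b')
    (app2 (fun m' => b (embF t m')) b') (app2 b d)
    (isHomog_bl (fun k m' => hX k (embF t m')) (isHomog_zero _ _) (isHomog_zero _ _)
      (isHomog_one hone b'))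
    (isHomog_bl hQinc (isHomog_zero _ _) hZ hY) heq
  have := t.pos
  omega


lemma corner_iff (hone : (1:R) ∈ 𝒜 1)
    (hmul : ∀ {γ δ : Γ} {x y : R}, x ∈ 𝒜 γ → y ∈ 𝒜 δ → x * y ∈ 𝒜 (γ * δ))
    (hP : IsGrPrimeMatrixIdeal 𝒜 P) {n m : ℕ}
    (X : Matrix (Fin n) (Fin n) R) (Y : Matrix (Fin m) (Fin m) R) (Z : Matrix (Fin m) (Fin n) R)
    (a b : Fin n → Γ) (b' d : Fin m → Γ)
    (hX : IsHomog 𝒜 X a b) (hY : IsHomog 𝒜 Y b' d) (hZ : IsHomog 𝒜 Z b' b) :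
    ((⟨n + m, bl X 0 0 Y⟩ : SqMat R) ∈ P ↔ (⟨n + m, bl X 0 Z Y⟩ : SqMat R) ∈ P) := by
  let Zt : ℕ → Matrix (Fin m) (Fin n) R := fun t k l => if (l : ℕ) < t then Z k l else 0
  have hZth : ∀ t, IsHomog 𝒜 (Zt t) b' b := by
    intro t k l; dsimp [Zt]; split; exacts [hZ k l, zero_mem _]
  have key : ∀ t, t ≤ n →
      ((⟨n + m, bl X 0 0 Y⟩ : SqMat R) ∈ P ↔ (⟨n + m, bl X 0 (Zt t) Y⟩ : SqMat R) ∈ P) := by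
    intro t
    induction t with
    | zero =>
      intro _
      have e0 : Zt 0 = 0 := by funext k l; simp [Zt]
      rw [e0]
    | succ t ih =>
      intro ht
      rw [ih (by omega)]
      set tf : Fin n := ⟨t, by omega⟩ with htf
      set v : Fin (n + m) → R :=
        fun k => Sum.elim (fun _ => (0:R)) (fun k' => Z k' tf) (finSumFinEquiv.symm k) with hv
      have hv_c : ∀ k : Fin n, v (Fin.castAdd m k) = 0 := fun k => by
        simp only [finSumFinEquiv_apply_left, finSumFinEquiv_apply_right, finSumFinEquiv_symm_apply_castAdd, finSumFinEquiv_symm_apply_natAdd, Sum.elim_inl, Sum.elim_inr, app2_castAdd, app2_natAdd, hv]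
      have hv_n : ∀ k : Fin m, v (Fin.natAdd n k) = Z k tf := fun k => by
        simp only [finSumFinEquiv_apply_left, finSumFinEquiv_apply_right, finSumFinEquiv_symm_apply_castAdd, finSumFinEquiv_symm_apply_natAdd, Sum.elim_inl, Sum.elim_inr, app2_castAdd, app2_natAdd, hv]
      have hvdeg : ∀ k, v k ∈ 𝒜 (app2 a b' k * (app2 b d (Fin.castAdd m tf))⁻¹) := by
        intro k
        obtain ⟨sk, rfl⟩ := finSumFinEquiv.surjective k
        cases sk with
        | inl x =>
          simp only [finSumFinEquiv_apply_left, finSumFinEquiv_apply_right, finSumFinEquiv_symm_apply_castAdd, finSumFinEquiv_symm_apply_natAdd, Sum.elim_inl, Sum.elim_inr, app2_castAdd, app2_natAdd, hv]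
          exact zero_mem _
        | inr x =>
          simp only [finSumFinEquiv_apply_left, finSumFinEquiv_apply_right, finSumFinEquiv_symm_apply_castAdd, finSumFinEquiv_symm_apply_natAdd, Sum.elim_inl, Sum.elim_inr, app2_castAdd, app2_natAdd, hv]
          exact hZ x tf
      have hupdX : ∀ k : Fin n, updCol X tf (fun _ => (0:R)) k tf = 0 := fun k => by
        simp [updCol]
      have h1 : (⟨n + m, updCol (bl X 0 (Zt t) Y) (Fin.castAdd m tf) v⟩ : SqMat R) ∈ P := by
        rw [updCol_bl_inl,
          show (fun k => v (Fin.castAdd m k)) = (fun _ : Fin n => (0:R)) from funext hv_c,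
          show (fun k => v (Fin.natAdd n k)) = (fun k => Z k tf) from funext hv_n]
        exact blockZeroCol_mem hone hmul hP _ _ _ a b b' d
          (isHomog_updCol hX tf (fun k => zero_mem _))
          (isHomog_updCol (hZth t) tf (fun k => hZ k tf)) hY tf hupdX
      have h2 : (⟨n + m, updCol (bl X 0 (Zt t) Y) (Fin.castAdd m tf)
          (fun k => -(v k))⟩ : SqMat R) ∈ P := by
        rw [updCol_bl_inl,
          show (fun k => -(v (Fin.castAdd m k))) = (fun _ : Fin n => (0:R)) from
            funext (fun k => by rw [hv_c k, neg_zero]),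
          show (fun k => -(v (Fin.natAdd n k))) = (fun k => -(Z k tf)) from
            funext (fun k => by rw [hv_n])]
        exact blockZeroCol_mem hone hmul hP _ _ _ a b b' d
          (isHomog_updCol hX tf (fun k => zero_mem _))
          (isHomog_updCol (hZth t) tf (fun k => neg_mem (hZ k tf))) hY tf hupdX
      have step := add_col_iff hP (bl X 0 (Zt t) Y) (app2 a b') (app2 b d)
        (isHomog_bl hX (isHomog_zero _ _) (hZth t) hY) (Fin.castAdd m tf) v hvdeg h1 h2
      rw [step]
      have eX : addCol X tf (fun _ : Fin n => (0:R)) = X := by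
        funext k l; simp [addCol]
      have eZ : addCol (Zt t) tf (fun k => Z k tf) = Zt (t+1) := by
        funext k l
        by_cases hl : l = tf
        · have hlv : (l:ℕ) = t := by rw [hl]
          simp [addCol, hl, Zt, hlv, htf]
        · have hlv : (l:ℕ) ≠ t := fun h => hl (Fin.ext (by rw [h]))
          have hiff : ((l:ℕ) < t+1) ↔ ((l:ℕ) < t) := by omega
          simp [addCol, hl, Zt, hiff]
      have heq2 : addCol (bl X 0 (Zt t) Y) (Fin.castAdd m tf) v = bl X 0 (Zt (t+1)) Y := by
        rw [addCol_bl_inl,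
          show (fun k => v (Fin.castAdd m k)) = (fun _ : Fin n => (0:R)) from funext hv_c,
          show (fun k => v (Fin.natAdd n k)) = (fun k => Z k tf) from funext hv_n,
          eX, eZ]
      rw [heq2]
  have hfin := key n le_rfl
  have e1 : Zt n = Z := by funext k l; simp [Zt, l.isLt]
  rwa [e1] at hfin

lemma step2 (hone : (1:R) ∈ 𝒜 1)
    (hmul : ∀ {γ δ : Γ} {x y : R}, x ∈ 𝒜 γ → y ∈ 𝒜 δ → x * y ∈ 𝒜 (γ * δ))
    (hP : IsGrPrimeMatrixIdeal 𝒜 P) {n : ℕ} (A B : Matrix (Fin n) (Fin n) R)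
    (α β δ : Fin n → Γ) (hA : IsHomog 𝒜 A α β) (hB : IsHomog 𝒜 B β δ) :
    ((⟨n + n, bl A 0 (-1) B⟩ : SqMat R) ∈ P ↔
     (⟨n + n, bl A (A * B) (-1) 0⟩ : SqMat R) ∈ P) := by
  let Wt : ℕ → Matrix (Fin n) (Fin n) R := fun t k l => if (l : ℕ) < t then (A * B) k l else 0
  let Vt : ℕ → Matrix (Fin n) (Fin n) R := fun t k l => if (l : ℕ) < t then 0 else B k l
  have hWth : ∀ t, IsHomog 𝒜 (Wt t) α δ := fun t k l => by
    dsimp [Wt]; split; exacts [isHomog_mul hmul hA hB k l, zero_mem _]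
  have hVth : ∀ t, IsHomog 𝒜 (Vt t) β δ := fun t k l => by
    dsimp [Vt]; split; exacts [zero_mem _, hB k l]
  have hneg1 : IsHomog 𝒜 (-1 : Matrix (Fin n) (Fin n) R) β β :=
    isHomog_neg (isHomog_one hone β)
  have key : ∀ t, t ≤ n →
      ((⟨n + n, bl A 0 (-1) B⟩ : SqMat R) ∈ P ↔
       (⟨n + n, bl A (Wt t) (-1) (Vt t)⟩ : SqMat R) ∈ P) := by
    intro t
    induction t with
    | zero =>
      intro _
      have e0 : Wt 0 = 0 := by funext k l; simp [Wt]
      have e1 : Vt 0 = B := by funext k l; simp [Vt]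
      rw [e0, e1]
    | succ t ih =>
      intro ht
      rw [ih (by omega)]
      set tf : Fin n := ⟨t, by omega⟩ with htf
      set c : Fin (n + n) → R :=
        fun i => Sum.elim (fun x => B x tf) (fun _ => (0:R)) (finSumFinEquiv.symm i) with hc
      have hc_c : ∀ x : Fin n, c (Fin.castAdd n x) = B x tf := fun x => by
        simp only [finSumFinEquiv_apply_left, finSumFinEquiv_apply_right, finSumFinEquiv_symm_apply_castAdd, finSumFinEquiv_symm_apply_natAdd, Sum.elim_inl, Sum.elim_inr, app2_castAdd, app2_natAdd, hc]
      have hc_n : ∀ x : Fin n, c (Fin.natAdd n x) = 0 := fun x => by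
        simp only [finSumFinEquiv_apply_left, finSumFinEquiv_apply_right, finSumFinEquiv_symm_apply_castAdd, finSumFinEquiv_symm_apply_natAdd, Sum.elim_inl, Sum.elim_inr, app2_castAdd, app2_natAdd, hc]
      have hMh : IsHomog 𝒜 (bl A (Wt t) (-1) (Vt t)) (app2 α β) (app2 β δ) :=
        isHomog_bl hA (hWth t) hneg1 (hVth t)
      have hcdeg : ∀ i, c i ∈ 𝒜 (app2 β δ i * (app2 β δ (Fin.natAdd n tf))⁻¹) := by
        intro i
        obtain ⟨si, rfl⟩ := finSumFinEquiv.surjective i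
        cases si with
        | inl x =>
          simp only [finSumFinEquiv_apply_left, finSumFinEquiv_apply_right, finSumFinEquiv_symm_apply_castAdd, finSumFinEquiv_symm_apply_natAdd, Sum.elim_inl, Sum.elim_inr, app2_castAdd, app2_natAdd, hc]
          exact hB x tf
        | inr x =>
          simp only [finSumFinEquiv_apply_left, finSumFinEquiv_apply_right, finSumFinEquiv_symm_apply_castAdd, finSumFinEquiv_symm_apply_natAdd, Sum.elim_inl, Sum.elim_inr, app2_castAdd, app2_natAdd, hc]
          exact zero_mem _
      have step := comb_iff hone hmul hP (bl A (Wt t) (-1) (Vt t)) (app2 α β) (app2 β δ)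
        hMh (Fin.natAdd n tf) c hcdeg (hc_n tf)
      rw [step]
      have hvsum : (fun k => ∑ i, bl A (Wt t) (-1) (Vt t) k i * c i)
          = (fun k => Sum.elim (fun x => (A * B) x tf) (fun x => -(B x tf))
              (finSumFinEquiv.symm k)) := by
        funext k
        rw [← Equiv.sum_comp finSumFinEquiv
          (fun i => bl A (Wt t) (-1) (Vt t) k i * c i), Fintype.sum_sum_type]
        obtain ⟨sk, rfl⟩ := finSumFinEquiv.surjective k
        cases sk with
        | inl x =>
          simp only [finSumFinEquiv_apply_left, finSumFinEquiv_apply_right,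
            finSumFinEquiv_symm_apply_castAdd, Sum.elim_inl, bl_cc, bl_cn]
          rw [show (∑ i : Fin n, A x i * c (Fin.castAdd n i)) = ∑ i : Fin n, A x i * B i tf from
            Finset.sum_congr rfl fun i _ => by rw [hc_c]]
          rw [show (∑ i : Fin n, Wt t x i * c (Fin.natAdd n i)) = 0 from
            Finset.sum_eq_zero fun i _ => by rw [hc_n, mul_zero]]
          rw [add_zero, ← Matrix.mul_apply]
        | inr x =>
          simp only [finSumFinEquiv_apply_left, finSumFinEquiv_apply_right,
            finSumFinEquiv_symm_apply_natAdd, Sum.elim_inr, bl_nc, bl_nn]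
          rw [show (∑ i : Fin n, (-1 : Matrix (Fin n) (Fin n) R) x i * c (Fin.castAdd n i))
              = ∑ i : Fin n, (-1 : Matrix (Fin n) (Fin n) R) x i * B i tf from
            Finset.sum_congr rfl fun i _ => by rw [hc_c]]
          rw [show (∑ i : Fin n, Vt t x i * c (Fin.natAdd n i)) = 0 from
            Finset.sum_eq_zero fun i _ => by rw [hc_n, mul_zero]]
          rw [add_zero, ← Matrix.mul_apply, neg_one_mul, Matrix.neg_apply]
      have eW : addCol (Wt t) tf (fun k => (A * B) k tf) = Wt (t+1) := by
        funext k l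
        by_cases hl : l = tf
        · have hlv : (l:ℕ) = t := by rw [hl]
          simp [addCol, hl, Wt, hlv, htf]
        · have hlv : (l:ℕ) ≠ t := fun h => hl (Fin.ext (by rw [h]))
          have hiff : ((l:ℕ) < t+1) ↔ ((l:ℕ) < t) := by omega
          simp [addCol, hl, Wt, hiff]
      have eV : addCol (Vt t) tf (fun k => -(B k tf)) = Vt (t+1) := by
        funext k l
        by_cases hl : l = tf
        · have hlv : (l:ℕ) = t := by rw [hl]
          simp [addCol, hl, Vt, hlv, htf]
        · have hlv : (l:ℕ) ≠ t := fun h => hl (Fin.ext (by rw [h]))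
          have hiff : ((l:ℕ) < t+1) ↔ ((l:ℕ) < t) := by omega
          simp [addCol, hl, Vt, hiff]
      have heq2 : addCol (bl A (Wt t) (-1) (Vt t)) (Fin.natAdd n tf)
          (fun k => ∑ i, bl A (Wt t) (-1) (Vt t) k i * c i)
          = bl A (Wt (t+1)) (-1) (Vt (t+1)) := by
        rw [hvsum, addCol_bl_inr]
        rw [show (fun k => Sum.elim (fun x => (A * B) x tf) (fun x => -(B x tf))
              (finSumFinEquiv.symm (Fin.castAdd n k))) = (fun k => (A * B) k tf) from
          funext fun k => by rw [finSumFinEquiv_symm_apply_castAdd, Sum.elim_inl],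
          show (fun k => Sum.elim (fun x => (A * B) x tf) (fun x => -(B x tf))
              (finSumFinEquiv.symm (Fin.natAdd n k))) = (fun k => -(B k tf)) from
          funext fun k => by rw [finSumFinEquiv_symm_apply_natAdd, Sum.elim_inr],
          eW, eV]
      rw [heq2]
  have hfin := key n le_rfl
  have e0 : Wt n = A * B := by funext k l; simp [Wt, l.isLt]
  have e1 : Vt n = 0 := by funext k l; simp [Vt, l.isLt]
  rwa [e0, e1] at hfin


lemma mem_iff_submatrix (hP : IsGrPrimeMatrixIdeal 𝒜 P) {N : ℕ}
    (M : Matrix (Fin N) (Fin N) R) (e f : Equiv.Perm (Fin N)) :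
    ((⟨N, M⟩ : SqMat R) ∈ P ↔ (⟨N, M.submatrix ⇑e ⇑f⟩ : SqMat R) ∈ P) := by
  constructor
  · exact fun h => hP.pm6 M e f h
  · intro h
    have h2 := hP.pm6 _ e⁻¹ f⁻¹ h
    have e3 : (M.submatrix ⇑e ⇑f).submatrix ⇑e⁻¹ ⇑f⁻¹ = M := by
      rw [Matrix.submatrix_submatrix]
      have he : ⇑e ∘ ⇑e⁻¹ = id := by funext x; simp
      have hf : ⇑f ∘ ⇑f⁻¹ = id := by funext x; simp
      rw [he, hf, Matrix.submatrix_id_id]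
    rwa [e3] at h2

def blkSwap (n : ℕ) : Equiv.Perm (Fin (n + n)) :=
  finSumFinEquiv.symm.trans ((Equiv.sumComm (Fin n) (Fin n)).trans finSumFinEquiv)

lemma blkSwap_castAdd {n : ℕ} (x : Fin n) : blkSwap n (Fin.castAdd n x) = Fin.natAdd n x := by
  simp only [blkSwap, Equiv.trans_apply, finSumFinEquiv_symm_apply_castAdd,
    Equiv.sumComm_apply, Sum.swap_inl, finSumFinEquiv_apply_right]

lemma blkSwap_natAdd {n : ℕ} (x : Fin n) : blkSwap n (Fin.natAdd n x) = Fin.castAdd n x := by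
  simp only [blkSwap, Equiv.trans_apply, finSumFinEquiv_symm_apply_natAdd,
    Equiv.sumComm_apply, Sum.swap_inr, finSumFinEquiv_apply_left]

lemma mem_iff_swap_cols (hP : IsGrPrimeMatrixIdeal 𝒜 P) {n : ℕ}
    (X Y Z W : Matrix (Fin n) (Fin n) R) :
    ((⟨n + n, bl X Y Z W⟩ : SqMat R) ∈ P ↔ (⟨n + n, bl Y X W Z⟩ : SqMat R) ∈ P) := by
  have h := mem_iff_submatrix hP (bl X Y Z W) 1 (blkSwap n)
  have e3 : (bl X Y Z W).submatrix ⇑(1 : Equiv.Perm (Fin (n+n))) ⇑(blkSwap n) = bl Y X W Z := by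
    ext i j
    obtain ⟨si, rfl⟩ := finSumFinEquiv.surjective i
    obtain ⟨sj, rfl⟩ := finSumFinEquiv.surjective j
    cases si <;> cases sj <;>
      simp only [Matrix.submatrix_apply, Equiv.Perm.coe_one, id_eq,
        finSumFinEquiv_apply_left, finSumFinEquiv_apply_right,
        blkSwap_castAdd, blkSwap_natAdd, bl_cc, bl_cn, bl_nc, bl_nn]
  rwa [e3] at h

lemma mem_iff_swap_both (hP : IsGrPrimeMatrixIdeal 𝒜 P) {n : ℕ}
    (X Y Z W : Matrix (Fin n) (Fin n) R) :
    ((⟨n + n, bl X Y Z W⟩ : SqMat R) ∈ P ↔ (⟨n + n, bl W Z Y X⟩ : SqMat R) ∈ P) := by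
  have h := mem_iff_submatrix hP (bl X Y Z W) (blkSwap n) (blkSwap n)
  have e3 : (bl X Y Z W).submatrix ⇑(blkSwap n) ⇑(blkSwap n) = bl W Z Y X := by
    ext i j
    obtain ⟨si, rfl⟩ := finSumFinEquiv.surjective i
    obtain ⟨sj, rfl⟩ := finSumFinEquiv.surjective j
    cases si <;> cases sj <;>
      simp only [Matrix.submatrix_apply,
        finSumFinEquiv_apply_left, finSumFinEquiv_apply_right,
        blkSwap_castAdd, blkSwap_natAdd, bl_cc, bl_cn, bl_nc, bl_nn]
  rwa [e3] at h

lemma diagSum_eq_bl {k l : ℕ} (X : Matrix (Fin k) (Fin k) R) (Y : Matrix (Fin l) (Fin l) R) :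
    diagSum X Y = bl X 0 0 Y := rfl

lemma diagSum_one {k l : ℕ} :
    diagSum (1 : Matrix (Fin k) (Fin k) R) (1 : Matrix (Fin l) (Fin l) R)
      = (1 : Matrix (Fin (k+l)) (Fin (k+l)) R) := by
  show Matrix.reindex finSumFinEquiv finSumFinEquiv
    (Matrix.fromBlocks 1 0 0 1) = _
  rw [Matrix.fromBlocks_one, Matrix.reindex_apply, Matrix.submatrix_one_equiv]

lemma diagSum_neg {k l : ℕ} (X : Matrix (Fin k) (Fin k) R) (Y : Matrix (Fin l) (Fin l) R) :
    diagSum (-X) (-Y) = -(diagSum X Y) := by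
  ext i j
  obtain ⟨si, rfl⟩ := finSumFinEquiv.surjective i
  obtain ⟨sj, rfl⟩ := finSumFinEquiv.surjective j
  cases si <;> cases sj <;>
    simp [diagSum_eq_bl, Matrix.neg_apply]

lemma zero_not_mem (hone : (1:R) ∈ 𝒜 1) (hP : IsGrPrimeMatrixIdeal 𝒜 P)
    (M : Matrix (Fin 0) (Fin 0) R) : (⟨0, M⟩ : SqMat R) ∉ P := by
  intro h
  have h2 := hP.pm3 M (1 : Matrix (Fin 1) (Fin 1) R) h
    ⟨fun _ => 1, fun _ => 1, isHomog_one hone _⟩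
  have e1 : diagSum M (1 : Matrix (Fin 1) (Fin 1) R)
      = (1 : Matrix (Fin (0+1)) (Fin (0+1)) R) := by
    ext i j
    obtain ⟨si, rfl⟩ := finSumFinEquiv.surjective i
    obtain ⟨sj, rfl⟩ := finSumFinEquiv.surjective j
    cases si with
    | inl x => exact x.elim0
    | inr x =>
      cases sj with
      | inl y => exact y.elim0
      | inr y =>
        rw [Subsingleton.elim x y, diagSum_eq_bl, finSumFinEquiv_apply_right, bl_nn,
          Matrix.one_apply_eq, Matrix.one_apply_eq]
  rw [e1] at h2
  exact hP.pm5 h2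

lemma negOne1_not_mem (hone : (1:R) ∈ 𝒜 1)
    (hmul : ∀ {γ δ : Γ} {x y : R}, x ∈ 𝒜 γ → y ∈ 𝒜 δ → x * y ∈ 𝒜 (γ * δ))
    (hP : IsGrPrimeMatrixIdeal 𝒜 P) :
    (⟨1, (-1 : Matrix (Fin 1) (Fin 1) R)⟩ : SqMat R) ∉ P := by
  intro h
  have h01 : ∀ (M : Matrix (Fin 2) (Fin 2) R),
      (∀ i j, M i j = 0 ∨ M i j = 1 ∨ M i j = -1) →
      IsHomog 𝒜 M (fun _ => (1:Γ)) (fun _ => (1:Γ)) := by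
    intro M hM i j
    rcases hM i j with h'|h'|h' <;> rw [h']
    · exact zero_mem _
    · exact deg_cast hone (by group)
    · exact deg_cast (neg_mem hone) (by group)
  have hcA : ∀ i, (![(-1:R),0]) i ∈ 𝒜 ((fun _ => (1:Γ)) i * ((fun _ => (1:Γ)) (1 : Fin 2))⁻¹) := by
    intro i; fin_cases i
    · exact deg_cast (neg_mem hone) (by group)
    · exact zero_mem _
  have hcB : ∀ i, (![(0:R),1]) i ∈ 𝒜 ((fun _ => (1:Γ)) i * ((fun _ => (1:Γ)) (0 : Fin 2))⁻¹) := by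
    intro i; fin_cases i
    · exact zero_mem _
    · exact deg_cast hone (by group)
  have h2 := hP.pm3 _ _ h
    (⟨fun _ => (1:Γ), fun _ => (1:Γ), isHomog_neg (isHomog_one hone _)⟩ :
      IsHomogSq 𝒜 (-1 : Matrix (Fin 1) (Fin 1) R))
  have e0 : diagSum (-1 : Matrix (Fin 1) (Fin 1) R) (-1 : Matrix (Fin 1) (Fin 1) R)
      = (!![-1,0;0,-1] : Matrix (Fin 2) (Fin 2) R) := by
    rw [show (-1 : Matrix (Fin 1) (Fin 1) R) = -(1 : Matrix (Fin 1) (Fin 1) R) from rfl,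
      diagSum_neg, diagSum_one]
    ext i j
    fin_cases i <;> fin_cases j <;> simp [Matrix.one_apply]
  rw [e0] at h2
  -- six column operations
  have step : ∀ (M M' : Matrix (Fin 2) (Fin 2) R) (j : Fin 2) (c : Fin 2 → R),
      (∀ i j, M i j = 0 ∨ M i j = 1 ∨ M i j = -1) →
      (∀ i, c i ∈ 𝒜 ((fun _ => (1:Γ)) i * ((fun _ => (1:Γ)) j)⁻¹)) → c j = 0 →
      addCol M j (fun k => ∑ i, M k i * c i) = M' →
      (⟨2, M⟩ : SqMat R) ∈ P → (⟨2, M'⟩ : SqMat R) ∈ P := by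
    intro M M' j c hM hc hcj he hmem
    have := (comb_iff hone hmul hP M (fun _ => (1:Γ)) (fun _ => (1:Γ))
      (h01 M hM) j c hc hcj).mp hmem
    rwa [he] at this
  have h3 := step _ (!![-1,1;0,-1]) 1 ![(-1:R),0] (by intro i j; fin_cases i <;> fin_cases j <;> norm_num) hcA (by norm_num)
    (by ext k l; fin_cases k <;> fin_cases l <;> simp [addCol, Fin.sum_univ_two] <;> ring) h2
  have h4 := step _ (!![0,1;-1,-1]) 0 ![(0:R),1] (by intro i j; fin_cases i <;> fin_cases j <;> norm_num) hcB (by norm_num)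
    (by ext k l; fin_cases k <;> fin_cases l <;> simp [addCol, Fin.sum_univ_two] <;> ring) h3
  have h5 := step _ (!![0,1;-1,0]) 1 ![(-1:R),0] (by intro i j; fin_cases i <;> fin_cases j <;> norm_num) hcA (by norm_num)
    (by ext k l; fin_cases k <;> fin_cases l <;> simp [addCol, Fin.sum_univ_two] <;> ring) h4
  have h6 := step _ (!![0,1;-1,1]) 1 ![(-1:R),0] (by intro i j; fin_cases i <;> fin_cases j <;> norm_num) hcA (by norm_num)
    (by ext k l; fin_cases k <;> fin_cases l <;> simp [addCol, Fin.sum_univ_two] <;> ring) h5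
  have h7 := step _ (!![1,1;0,1]) 0 ![(0:R),1] (by intro i j; fin_cases i <;> fin_cases j <;> norm_num) hcB (by norm_num)
    (by ext k l; fin_cases k <;> fin_cases l <;> simp [addCol, Fin.sum_univ_two] <;> ring) h6
  have h8 := step _ (!![1,0;0,1]) 1 ![(-1:R),0] (by intro i j; fin_cases i <;> fin_cases j <;> norm_num) hcA (by norm_num)
    (by ext k l; fin_cases k <;> fin_cases l <;> simp [addCol, Fin.sum_univ_two] <;> ring) h7
  have e7 : (!![1,0;0,1] : Matrix (Fin 2) (Fin 2) R) = 1 := by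
    ext i j; fin_cases i <;> fin_cases j <;> simp [Matrix.one_apply]
  rw [e7] at h8
  have h9 : (⟨1+1, diagSum (1 : Matrix (Fin 1) (Fin 1) R) (1 : Matrix (Fin 1) (Fin 1) R)⟩ : SqMat R) ∈ P := by
    rw [smk diagSum_one]; exact h8
  rcases hP.pm4 _ _
    (⟨fun _ => (1:Γ), fun _ => (1:Γ), isHomog_one hone _⟩ : IsHomogSq 𝒜 (1 : Matrix (Fin 1) (Fin 1) R))
    (⟨fun _ => (1:Γ), fun _ => (1:Γ), isHomog_one hone _⟩ : IsHomogSq 𝒜 (1 : Matrix (Fin 1) (Fin 1) R))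
    h9 with h'|h' <;> exact hP.pm5 h'

lemma negOne_not_mem (hone : (1:R) ∈ 𝒜 1)
    (hmul : ∀ {γ δ : Γ} {x y : R}, x ∈ 𝒜 γ → y ∈ 𝒜 δ → x * y ∈ 𝒜 (γ * δ))
    (hP : IsGrPrimeMatrixIdeal 𝒜 P) :
    ∀ n : ℕ, (⟨n, (-1 : Matrix (Fin n) (Fin n) R)⟩ : SqMat R) ∉ P := by
  intro n
  induction n with
  | zero => exact zero_not_mem hone hP _
  | succ k ih =>
    intro h
    have e1 : (-1 : Matrix (Fin (k+1)) (Fin (k+1)) R)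
        = diagSum (-1 : Matrix (Fin k) (Fin k) R) (-1 : Matrix (Fin 1) (Fin 1) R) := by
      rw [show (-1 : Matrix (Fin k) (Fin k) R) = -(1 : Matrix (Fin k) (Fin k) R) from rfl,
        show (-1 : Matrix (Fin 1) (Fin 1) R) = -(1 : Matrix (Fin 1) (Fin 1) R) from rfl,
        diagSum_neg, diagSum_one]
    rw [smk e1] at h
    rcases hP.pm4 _ _
      (⟨fun _ => (1:Γ), fun _ => (1:Γ), isHomog_neg (isHomog_one hone _)⟩ :
        IsHomogSq 𝒜 (-1 : Matrix (Fin k) (Fin k) R))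
      (⟨fun _ => (1:Γ), fun _ => (1:Γ), isHomog_neg (isHomog_one hone _)⟩ :
        IsHomogSq 𝒜 (-1 : Matrix (Fin 1) (Fin 1) R))
      h with h'|h'
    · exact ih h'
    · exact negOne1_not_mem hone hmul hP h'

end GrAux
/-- Let `𝒫` be a gr-prime matrix ideal of the `Γ`-graded ring `R`.
If `A` is an `n × n` homogeneous matrix of distribution `(α, β)` and `B` is an
`n × n` homogeneous matrix of distribution `(β, δ)`, then `A * B ∈ 𝒫` if and only
if `A ⊕ B ∈ 𝒫`. -/
theorem grPrime_mul_mem_iff_diagSum_mem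
    {Γ : Type u} [Group Γ] [DecidableEq Γ] {R : Type v} [Ring R]
    (𝒜 : Γ → AddSubgroup R)
    (hinternal : DirectSum.IsInternal 𝒜)
    (hone : (1 : R) ∈ 𝒜 1)
    (hmul : ∀ {γ δ : Γ} {x y : R}, x ∈ 𝒜 γ → y ∈ 𝒜 δ → x * y ∈ 𝒜 (γ * δ))
    (P : Set (SqMat R)) (hP : IsGrPrimeMatrixIdeal 𝒜 P)
    {n : ℕ} (A B : Matrix (Fin n) (Fin n) R) (α β δ : Fin n → Γ)
    (hA : IsHomog 𝒜 A α β) (hB : IsHomog 𝒜 B β δ) :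
    (⟨n, A * B⟩ : SqMat R) ∈ P ↔ (⟨n + n, diagSum A B⟩ : SqMat R) ∈ P := by
  have hAB : IsHomog 𝒜 (A * B) α δ := GrAux.isHomog_mul hmul hA hB
  have hneg1 : IsHomog 𝒜 (-1 : Matrix (Fin n) (Fin n) R) β β :=
    GrAux.isHomog_neg (GrAux.isHomog_one hone β)
  have ebl : diagSum A B = GrAux.bl A 0 0 B := rfl
  have i1 := GrAux.corner_iff hone hmul hP A B (-1 : Matrix (Fin n) (Fin n) R)
    α β β δ hA hB hneg1
  have i2 := GrAux.step2 hone hmul hP A B α β δ hA hB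
  have i3 := GrAux.mem_iff_swap_cols hP A (A*B) (-1 : Matrix (Fin n) (Fin n) R) 0
  have i4 := GrAux.mem_iff_swap_both hP (A*B) A 0 (-1 : Matrix (Fin n) (Fin n) R)
  have i5 := GrAux.corner_iff hone hmul hP (-1 : Matrix (Fin n) (Fin n) R) (A*B) A
    β β α δ hneg1 hAB hA
  have i6 := GrAux.mem_iff_swap_both hP (-1 : Matrix (Fin n) (Fin n) R) 0 0 (A*B)
  have i7 : ((⟨n+n, GrAux.bl (A*B) 0 0 (-1 : Matrix (Fin n) (Fin n) R)⟩ : SqMat R) ∈ P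
      ↔ (⟨n, A*B⟩ : SqMat R) ∈ P) := by
    constructor
    · intro h
      rcases hP.pm4 (A*B) (-1 : Matrix (Fin n) (Fin n) R) ⟨α, δ, hAB⟩ ⟨β, β, hneg1⟩ h with h'|h'
      · exact h'
      · exact absurd h' (GrAux.negOne_not_mem hone hmul hP n)
    · intro h
      exact hP.pm3 (A*B) (-1 : Matrix (Fin n) (Fin n) R) h ⟨β, β, hneg1⟩
  rw [ebl]
  exact (((((i1.trans i2).trans i3).trans i4).trans i5.symm).trans (i6.trans i7)).symm
end

section
/- Let Γ be a group, R a Γ-graded ring, and 𝒫 a gr-prime matrix ideal of R. Then no invertible matrix belongs to 𝒫: if A ∈ 𝔐(R) is invertible in the full matrix ring over R, then A ∉ 𝒫. In particular, no identity matrix belongs to 𝒫. -/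
open Matrix

universe u v w

set_option linter.unusedSectionVars false
section Aux
variable {Γ : Type u} [Group Γ] [DecidableEq Γ] {R : Type v} [Ring R]
variable {𝒜 : Γ → AddSubgroup R}

noncomputable def prjHom (hint : DirectSum.IsInternal 𝒜) (γ : Γ) : R →+ R where
  toFun x := ((AddEquiv.ofBijective (DirectSum.coeAddMonoidHom 𝒜) hint).symm x γ : R)
  map_zero' := by simp
  map_add' x y := by simp

lemma prjHom_mem (hint : DirectSum.IsInternal 𝒜) (γ : Γ) (x : R) :
    prjHom hint γ x ∈ 𝒜 γ := SetLike.coe_mem _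

lemma prjHom_of_mem (hint : DirectSum.IsInternal 𝒜) {γ δ : Γ} {x : R} (hx : x ∈ 𝒜 δ) :
    prjHom hint γ x = if δ = γ then x else 0 := by
  have h : (AddEquiv.ofBijective (DirectSum.coeAddMonoidHom 𝒜) hint).symm x
      = DirectSum.of (fun γ => ↥(𝒜 γ)) δ ⟨x, hx⟩ := by
    rw [AddEquiv.symm_apply_eq]
    show x = DirectSum.coeAddMonoidHom 𝒜 ((DirectSum.of (fun γ => ↥(𝒜 γ)) δ) ⟨x, hx⟩)
    rw [DirectSum.coeAddMonoidHom_of]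
  show ((AddEquiv.ofBijective (DirectSum.coeAddMonoidHom 𝒜) hint).symm x γ : R) = _
  rw [h]
  by_cases hγ : δ = γ
  · subst hγ; rw [DirectSum.of_eq_same]; simp
  · rw [DirectSum.of_eq_of_ne _ _ _ (Ne.symm hγ)]; simp [hγ]

lemma prjHom_mul_left (hint : DirectSum.IsInternal 𝒜)
    (hmul : ∀ {γ δ : Γ} {x y : R}, x ∈ 𝒜 γ → y ∈ 𝒜 δ → x * y ∈ 𝒜 (γ * δ))
    {δ : Γ} {a : R} (ha : a ∈ 𝒜 δ) (γ : Γ) (x : R) :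
    prjHom hint γ (a * x) = a * prjHom hint (δ⁻¹ * γ) x := by
  obtain ⟨z, rfl⟩ := hint.surjective x
  induction z using DirectSum.induction_on with
  | zero => simp
  | of γ' y =>
      rw [DirectSum.coeAddMonoidHom_of]
      rw [prjHom_of_mem hint (hmul ha y.2), prjHom_of_mem hint y.2]
      have : δ * γ' = γ ↔ γ' = δ⁻¹ * γ := by constructor <;> (rintro rfl; group)
      by_cases h : δ * γ' = γ
      · rw [if_pos h, if_pos (this.mp h)]
      · rw [if_neg h, if_neg (fun hh => h (this.mpr hh)), mul_zero]
  | add z1 z2 h1 h2 => simp only [map_add, mul_add, h1, h2]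

lemma prjHom_mul_right (hint : DirectSum.IsInternal 𝒜)
    (hmul : ∀ {γ δ : Γ} {x y : R}, x ∈ 𝒜 γ → y ∈ 𝒜 δ → x * y ∈ 𝒜 (γ * δ))
    {δ : Γ} {a : R} (ha : a ∈ 𝒜 δ) (γ : Γ) (x : R) :
    prjHom hint γ (x * a) = prjHom hint (γ * δ⁻¹) x * a := by
  obtain ⟨z, rfl⟩ := hint.surjective x
  induction z using DirectSum.induction_on with
  | zero => simp
  | of γ' y =>
      rw [DirectSum.coeAddMonoidHom_of]
      rw [prjHom_of_mem hint (hmul y.2 ha), prjHom_of_mem hint y.2]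
      have : γ' * δ = γ ↔ γ' = γ * δ⁻¹ := by constructor <;> (rintro rfl; group)
      by_cases h : γ' * δ = γ
      · rw [if_pos h, if_pos (this.mp h)]
      · rw [if_neg h, if_neg (fun hh => h (this.mpr hh)), zero_mul]
  | add z1 z2 h1 h2 => simp only [map_add, add_mul, h1, h2]

lemma exists_homog_inv (hint : DirectSum.IsInternal 𝒜)
    (hone : (1 : R) ∈ 𝒜 1)
    (hmul : ∀ {γ δ : Γ} {x y : R}, x ∈ 𝒜 γ → y ∈ 𝒜 δ → x * y ∈ 𝒜 (γ * δ))
    {n : ℕ} {A : Matrix (Fin n) (Fin n) R} {α β : Fin n → Γ}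
    (hA : IsHomog 𝒜 A α β) (hU : IsUnit A) :
    ∃ B : Matrix (Fin n) (Fin n) R, IsHomog 𝒜 B β α ∧ A * B = 1 ∧ B * A = 1 := by
  obtain ⟨B, hAB, hBA⟩ : ∃ B : Matrix (Fin n) (Fin n) R, A * B = 1 ∧ B * A = 1 := by
    obtain ⟨u, rfl⟩ := hU
    exact ⟨Units.val u⁻¹, u.mul_inv, u.inv_mul⟩
  refine ⟨fun k j => prjHom hint (β k * (α j)⁻¹) (B k j), fun k j => prjHom_mem _ _ _, ?_, ?_⟩
  · ext i j
    have : ∀ k, A i k * prjHom hint (β k * (α j)⁻¹) (B k j)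
        = prjHom hint (α i * (α j)⁻¹) (A i k * B k j) := by
      intro k
      have e : (α i * (β k)⁻¹)⁻¹ * (α i * (α j)⁻¹) = β k * (α j)⁻¹ := by group
      rw [prjHom_mul_left hint hmul (hA i k), e]
    show ∑ k, A i k * prjHom hint (β k * (α j)⁻¹) (B k j) = (1 : Matrix (Fin n) (Fin n) R) i j
    simp only [this]
    rw [← map_sum, ← Matrix.mul_apply, hAB]
    by_cases h : i = j
    · subst h
      rw [Matrix.one_apply_eq, prjHom_of_mem hint hone, if_pos (by group)]
    · rw [Matrix.one_apply_ne h, map_zero]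
  · ext i j
    have : ∀ k, prjHom hint (β i * (α k)⁻¹) (B i k) * A k j
        = prjHom hint (β i * (β j)⁻¹) (B i k * A k j) := by
      intro k
      have e : (β i * (β j)⁻¹) * (α k * (β j)⁻¹)⁻¹ = β i * (α k)⁻¹ := by group
      rw [prjHom_mul_right hint hmul (hA k j), e]
    show ∑ k, prjHom hint (β i * (α k)⁻¹) (B i k) * A k j = (1 : Matrix (Fin n) (Fin n) R) i j
    simp only [this]
    rw [← map_sum, ← Matrix.mul_apply, hBA]
    by_cases h : i = j
    · subst h
      rw [Matrix.one_apply_eq, prjHom_of_mem hint hone, if_pos (by group)]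
    · rw [Matrix.one_apply_ne h, map_zero]


variable {P : Set (SqMat R)}

lemma mem_graded_congr {x : R} {γ γ' : Γ} (h : x ∈ 𝒜 γ) (e : γ = γ') : x ∈ 𝒜 γ' := e ▸ h

lemma colStep (hP : IsGrPrimeMatrixIdeal 𝒜 P)
    (hone : (1 : R) ∈ 𝒜 1)
    (hmul : ∀ {γ δ : Γ} {x y : R}, x ∈ 𝒜 γ → y ∈ 𝒜 δ → x * y ∈ 𝒜 (γ * δ))
    {m : ℕ} (M : Matrix (Fin (m+1)) (Fin (m+1)) R) (ρ χ : Fin (m+1) → Γ)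
    (hM : IsHomog 𝒜 M ρ χ) (hMP : (⟨m+1, M⟩ : SqMat R) ∈ P)
    (j : Fin (m+1)) (lam : Fin (m+1) → R)
    (hlam : ∀ k, lam k ∈ 𝒜 (χ k * (χ j)⁻¹)) (hlamj : lam j = 0) :
    (⟨m+1, Matrix.of fun i c => if c = j then M i c + ∑ k, M i k * lam k else M i c⟩ : SqMat R) ∈ P
    ∧ IsHomog 𝒜 (Matrix.of fun i c => if c = j then M i c + ∑ k, M i k * lam k else M i c) ρ χ := by
  set X : Matrix (Fin (m+1)) (Fin (m+1)) R :=
    Matrix.of fun i c => if c = j then ∑ k, M i k * lam k else M i c with hX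
  have hsum : ∀ i, (∑ k, M i k * lam k) ∈ 𝒜 (ρ i * (χ j)⁻¹) := by
    intro i
    refine AddSubgroup.sum_mem _ fun k _ => ?_
    exact mem_graded_congr (hmul (hM i k) (hlam k)) (by group)
  have hXhom : IsHomog 𝒜 X ρ χ := by
    intro i c
    by_cases h : c = j
    · rw [show X i c = ∑ k, M i k * lam k from if_pos h, h]
      exact hsum i
    · rw [show X i c = M i c from if_neg h]
      exact hM i c
  have hXP : (⟨m+1, X⟩ : SqMat R) ∈ P := by
    apply hP.pm1 X ⟨ρ, χ, hXhom⟩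
    intro hfull
    have hle := hfull m (M.submatrix id j.succAbove)
      (Matrix.of fun k' c => if c = j then lam (j.succAbove k')
        else if j.succAbove k' = c then 1 else 0)
      ρ (χ ∘ j.succAbove) χ
      (fun i k' => hM i _)
      (by
        intro k' c
        by_cases h : c = j
        · rw [show (Matrix.of fun k' c => if c = j then lam (j.succAbove k')
            else if j.succAbove k' = c then 1 else 0) k' c = lam (j.succAbove k') from if_pos h, h]
          exact hlam _
        · rw [show (Matrix.of fun k' c => if c = j then lam (j.succAbove k')
            else if j.succAbove k' = c then 1 else 0) k' c
            = if j.succAbove k' = c then 1 else 0 from if_neg h]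
          by_cases h2 : j.succAbove k' = c
          · rw [if_pos h2]
            exact mem_graded_congr hone (by rw [Function.comp_apply, h2, mul_inv_cancel])
          · rw [if_neg h2]; exact zero_mem _)
      (by
        ext i c
        rw [Matrix.mul_apply]
        by_cases h : c = j
        · rw [show X i c = ∑ k, M i k * lam k from if_pos h]
          rw [Fin.sum_univ_succAbove (fun k => M i k * lam k) j, hlamj, mul_zero, zero_add]
          refine Finset.sum_congr rfl fun k' _ => ?_
          rw [Matrix.submatrix_apply, id_eq,
            show (Matrix.of fun k' c => if c = j then lam (j.succAbove k')
              else if j.succAbove k' = c then 1 else 0) k' c = lam (j.succAbove k') from if_pos h]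
        · rw [show X i c = M i c from if_neg h]
          obtain ⟨k₀, hk₀⟩ := Fin.exists_succAbove_eq (Ne.symm (fun hh => h hh.symm) : c ≠ j)
          rw [Finset.sum_eq_single_of_mem k₀ (Finset.mem_univ _) ?side]
          case side =>
            intro b _ hb
            rw [Matrix.submatrix_apply, id_eq,
              show (Matrix.of fun k' c => if c = j then lam (j.succAbove k')
                else if j.succAbove k' = c then 1 else 0) b c
                = if j.succAbove b = c then 1 else 0 from if_neg h, if_neg, mul_zero]
            intro hcon
            exact hb (Fin.succAbove_right_injective (hcon.trans hk₀.symm))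
          rw [Matrix.submatrix_apply, id_eq,
            show (Matrix.of fun k' c => if c = j then lam (j.succAbove k')
              else if j.succAbove k' = c then 1 else 0) k₀ c
              = if j.succAbove k₀ = c then 1 else 0 from if_neg h, if_pos hk₀, mul_one, hk₀])
    omega
  have hM'hom : IsHomog 𝒜 (Matrix.of fun i c =>
      if c = j then M i c + ∑ k, M i k * lam k else M i c) ρ χ := by
    intro i c
    by_cases h : c = j
    · rw [show (Matrix.of fun i c => if c = j then M i c + ∑ k, M i k * lam k else M i c) i c
        = M i c + ∑ k, M i k * lam k from if_pos h]
      refine add_mem (hM i c) (mem_graded_congr (hsum i) ?_)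
      rw [h]
    · rw [show (Matrix.of fun i c => if c = j then M i c + ∑ k, M i k * lam k else M i c) i c
        = M i c from if_neg h]
      exact hM i c
  refine ⟨?_, hM'hom⟩
  refine hP.pm2 M X _ hMP hXP ⟨⟨ρ, χ, hM, hXhom⟩, Or.inl ⟨j, ?_, ?_⟩⟩
  · intro i c hj
    rw [show X i c = M i c from if_neg hj]
  · intro i c
    by_cases h : c = j <;> simp [hX, h]

lemma rowStep (hP : IsGrPrimeMatrixIdeal 𝒜 P)
    (hone : (1 : R) ∈ 𝒜 1)
    (hmul : ∀ {γ δ : Γ} {x y : R}, x ∈ 𝒜 γ → y ∈ 𝒜 δ → x * y ∈ 𝒜 (γ * δ))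
    {m : ℕ} (M : Matrix (Fin (m+1)) (Fin (m+1)) R) (ρ χ : Fin (m+1) → Γ)
    (hM : IsHomog 𝒜 M ρ χ) (hMP : (⟨m+1, M⟩ : SqMat R) ∈ P)
    (i : Fin (m+1)) (lam : Fin (m+1) → R)
    (hlam : ∀ k, lam k ∈ 𝒜 (ρ i * (ρ k)⁻¹)) (hlami : lam i = 0) :
    (⟨m+1, Matrix.of fun r c => if r = i then M r c + ∑ k, lam k * M k c else M r c⟩ : SqMat R) ∈ P
    ∧ IsHomog 𝒜 (Matrix.of fun r c => if r = i then M r c + ∑ k, lam k * M k c else M r c) ρ χ := by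
  set X : Matrix (Fin (m+1)) (Fin (m+1)) R :=
    Matrix.of fun r c => if r = i then ∑ k, lam k * M k c else M r c with hX
  have hsum : ∀ c, (∑ k, lam k * M k c) ∈ 𝒜 (ρ i * (χ c)⁻¹) := by
    intro c
    refine AddSubgroup.sum_mem _ fun k _ => ?_
    exact mem_graded_congr (hmul (hlam k) (hM k c)) (by group)
  have hXhom : IsHomog 𝒜 X ρ χ := by
    intro r c
    by_cases h : r = i
    · rw [show X r c = ∑ k, lam k * M k c from if_pos h, h]
      exact hsum c
    · rw [show X r c = M r c from if_neg h]
      exact hM r c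
  have hXP : (⟨m+1, X⟩ : SqMat R) ∈ P := by
    apply hP.pm1 X ⟨ρ, χ, hXhom⟩
    intro hfull
    have hle := hfull m
      (Matrix.of fun r k' => if r = i then lam (i.succAbove k')
        else if i.succAbove k' = r then 1 else 0)
      (M.submatrix i.succAbove id)
      ρ (ρ ∘ i.succAbove) χ
      (by
        intro r k'
        by_cases h : r = i
        · rw [show (Matrix.of fun r k' => if r = i then lam (i.succAbove k')
            else if i.succAbove k' = r then 1 else 0) r k' = lam (i.succAbove k') from if_pos h, h]
          exact hlam _
        · rw [show (Matrix.of fun r k' => if r = i then lam (i.succAbove k')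
            else if i.succAbove k' = r then 1 else 0) r k'
            = if i.succAbove k' = r then 1 else 0 from if_neg h]
          by_cases h2 : i.succAbove k' = r
          · rw [if_pos h2]
            exact mem_graded_congr hone (by rw [Function.comp_apply, ← h2, mul_inv_cancel])
          · rw [if_neg h2]; exact zero_mem _)
      (fun k' c => hM _ c)
      (by
        ext r c
        rw [Matrix.mul_apply]
        by_cases h : r = i
        · rw [show X r c = ∑ k, lam k * M k c from if_pos h]
          rw [Fin.sum_univ_succAbove (fun k => lam k * M k c) i, hlami, zero_mul, zero_add]
          refine Finset.sum_congr rfl fun k' _ => ?_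
          rw [Matrix.submatrix_apply, id_eq,
            show (Matrix.of fun r k' => if r = i then lam (i.succAbove k')
              else if i.succAbove k' = r then 1 else 0) r k' = lam (i.succAbove k') from if_pos h]
        · rw [show X r c = M r c from if_neg h]
          obtain ⟨k₀, hk₀⟩ := Fin.exists_succAbove_eq (Ne.symm (fun hh => h hh.symm) : r ≠ i)
          rw [Finset.sum_eq_single_of_mem k₀ (Finset.mem_univ _) ?side]
          case side =>
            intro b _ hb
            rw [Matrix.submatrix_apply, id_eq,
              show (Matrix.of fun r k' => if r = i then lam (i.succAbove k')
                else if i.succAbove k' = r then 1 else 0) r b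
                = if i.succAbove b = r then 1 else 0 from if_neg h, if_neg, zero_mul]
            intro hcon
            exact hb (Fin.succAbove_right_injective (hcon.trans hk₀.symm))
          rw [Matrix.submatrix_apply, id_eq,
            show (Matrix.of fun r k' => if r = i then lam (i.succAbove k')
              else if i.succAbove k' = r then 1 else 0) r k₀
              = if i.succAbove k₀ = r then 1 else 0 from if_neg h, if_pos hk₀, one_mul, hk₀])
    omega
  have hM'hom : IsHomog 𝒜 (Matrix.of fun r c =>
      if r = i then M r c + ∑ k, lam k * M k c else M r c) ρ χ := by
    intro r c
    by_cases h : r = i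
    · rw [show (Matrix.of fun r c => if r = i then M r c + ∑ k, lam k * M k c else M r c) r c
        = M r c + ∑ k, lam k * M k c from if_pos h]
      refine add_mem (hM r c) (mem_graded_congr (hsum c) ?_)
      rw [h]
    · rw [show (Matrix.of fun r c => if r = i then M r c + ∑ k, lam k * M k c else M r c) r c
        = M r c from if_neg h]
      exact hM r c
  refine ⟨?_, hM'hom⟩
  refine hP.pm2 M X _ hMP hXP ⟨⟨ρ, χ, hM, hXhom⟩, Or.inr ⟨i, ?_, ?_⟩⟩
  · intro r c hi
    rw [show X r c = M r c from if_neg hi]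
  · intro r c
    by_cases h : r = i <;> simp [hX, h]


lemma colOps (hP : IsGrPrimeMatrixIdeal 𝒜 P)
    (hone : (1 : R) ∈ 𝒜 1)
    (hmul : ∀ {γ δ : Γ} {x y : R}, x ∈ 𝒜 γ → y ∈ 𝒜 δ → x * y ∈ 𝒜 (γ * δ))
    {N : ℕ} (J : Finset (Fin N))
    (M : Matrix (Fin N) (Fin N) R) (ρ χ : Fin N → Γ)
    (hM : IsHomog 𝒜 M ρ χ) (hMP : (⟨N, M⟩ : SqMat R) ∈ P)
    (T : Matrix (Fin N) (Fin N) R)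
    (hT : ∀ k c, T k c ∈ 𝒜 (χ k * (χ c)⁻¹))
    (h1 : ∀ k ∈ J, ∀ c, T k c = 0)
    (h2 : ∀ c ∉ J, ∀ k, T k c = 0) :
    (⟨N, M * (1 + T)⟩ : SqMat R) ∈ P ∧ IsHomog 𝒜 (M * (1 + T)) ρ χ := by
  induction J using Finset.induction_on generalizing M T with
  | empty =>
      have hT0 : T = 0 := by
        ext k c; exact h2 c (Finset.notMem_empty c) k
      rw [hT0, add_zero, Matrix.mul_one]
      exact ⟨hMP, hM⟩
  | @insert j J hj ih =>
      cases N with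
      | zero => exact j.elim0
      | succ m =>
        set T₀ : Matrix (Fin (m+1)) (Fin (m+1)) R :=
          Matrix.of fun k c => if c = j then T k j else 0 with hT₀
        set T₁ : Matrix (Fin (m+1)) (Fin (m+1)) R :=
          Matrix.of fun k c => if c = j then 0 else T k c with hT₁
        have hTjj : T j j = 0 := h1 j (Finset.mem_insert_self j J) j
        obtain ⟨hM₁P, hM₁hom⟩ := colStep hP hone hmul M ρ χ hM hMP j (fun k => T k j)
          (fun k => hT k j) hTjj
        have hM₁eq : (Matrix.of fun i c => if c = j then M i c + ∑ k, M i k * T k j else M i c)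
            = M * (1 + T₀) := by
          ext i c
          rw [Matrix.mul_add, Matrix.mul_one, Matrix.add_apply, Matrix.mul_apply]
          by_cases h : c = j
          · rw [Matrix.of_apply, if_pos h, h]
            congr 1
            exact Finset.sum_congr rfl fun k _ => by rw [show T₀ k j = T k j from if_pos rfl]
          · rw [Matrix.of_apply, if_neg h]
            rw [Finset.sum_eq_zero fun k _ => by rw [show T₀ k c = 0 from if_neg h, mul_zero],
              add_zero]
        rw [hM₁eq] at hM₁P hM₁hom
        have hres := ih (M * (1 + T₀)) hM₁hom hM₁P T₁
          (by
            intro k c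
            by_cases h : c = j
            · rw [show T₁ k c = 0 from if_pos h]; exact zero_mem _
            · rw [show T₁ k c = T k c from if_neg h]; exact hT k c)
          (fun k hk c => by
            by_cases h : c = j
            · exact if_pos h
            · rw [show T₁ k c = T k c from if_neg h]
              exact h1 k (Finset.mem_insert_of_mem hk) c)
          (fun c hc k => by
            by_cases h : c = j
            · exact if_pos h
            · rw [show T₁ k c = T k c from if_neg h]
              exact h2 c (by simp [h, hc]) k)
        have hfinal : M * (1 + T₀) * (1 + T₁) = M * (1 + T) := by
          rw [Matrix.mul_assoc]
          congr 1
          have hzero : T₀ * T₁ = 0 := by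
            ext i c
            rw [Matrix.mul_apply, Matrix.zero_apply]
            refine Finset.sum_eq_zero fun l _ => ?_
            by_cases hl : l = j
            · rw [show T₀ i l = T i j from if_pos hl, hl]
              have hT1 : T₁ j c = 0 := by
                by_cases h : c = j
                · exact if_pos h
                · rw [show T₁ j c = T j c from if_neg h]
                  exact h1 j (Finset.mem_insert_self j J) c
              rw [hT1, mul_zero]
            · rw [show T₀ i l = 0 from if_neg hl, zero_mul]
          have hsum : T₀ + T₁ = T := by
            ext i c
            by_cases h : c = j
            · rw [Matrix.add_apply, show T₀ i c = T i j from if_pos h,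
                show T₁ i c = 0 from if_pos h, add_zero, h]
            · rw [Matrix.add_apply, show T₀ i c = 0 from if_neg h,
                show T₁ i c = T i c from if_neg h, zero_add]
          rw [Matrix.add_mul, Matrix.one_mul, Matrix.mul_add, Matrix.mul_one, hzero, add_zero,
            ← hsum]
          abel
        rw [hfinal] at hres
        exact hres

lemma rowOps (hP : IsGrPrimeMatrixIdeal 𝒜 P)
    (hone : (1 : R) ∈ 𝒜 1)
    (hmul : ∀ {γ δ : Γ} {x y : R}, x ∈ 𝒜 γ → y ∈ 𝒜 δ → x * y ∈ 𝒜 (γ * δ))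
    {N : ℕ} (J : Finset (Fin N))
    (M : Matrix (Fin N) (Fin N) R) (ρ χ : Fin N → Γ)
    (hM : IsHomog 𝒜 M ρ χ) (hMP : (⟨N, M⟩ : SqMat R) ∈ P)
    (T : Matrix (Fin N) (Fin N) R)
    (hT : ∀ r k, T r k ∈ 𝒜 (ρ r * (ρ k)⁻¹))
    (h1 : ∀ r ∉ J, ∀ k, T r k = 0)
    (h2 : ∀ k ∈ J, ∀ r, T r k = 0) :
    (⟨N, (1 + T) * M⟩ : SqMat R) ∈ P ∧ IsHomog 𝒜 ((1 + T) * M) ρ χ := by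
  induction J using Finset.induction_on generalizing M T with
  | empty =>
      have hT0 : T = 0 := by
        ext r k; exact h1 r (Finset.notMem_empty r) k
      rw [hT0, add_zero, Matrix.one_mul]
      exact ⟨hMP, hM⟩
  | @insert i J hi ih =>
      cases N with
      | zero => exact i.elim0
      | succ m =>
        set T₀ : Matrix (Fin (m+1)) (Fin (m+1)) R :=
          Matrix.of fun r c => if r = i then T i c else 0 with hT₀
        set T₁ : Matrix (Fin (m+1)) (Fin (m+1)) R :=
          Matrix.of fun r c => if r = i then 0 else T r c with hT₁
        have hTii : T i i = 0 := h2 i (Finset.mem_insert_self i J) i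
        obtain ⟨hM₁P, hM₁hom⟩ := rowStep hP hone hmul M ρ χ hM hMP i (fun k => T i k)
          (fun k => hT i k) hTii
        have hM₁eq : (Matrix.of fun r c => if r = i then M r c + ∑ k, T i k * M k c else M r c)
            = (1 + T₀) * M := by
          ext r c
          rw [Matrix.add_mul, Matrix.one_mul, Matrix.add_apply, Matrix.mul_apply]
          by_cases h : r = i
          · rw [Matrix.of_apply, if_pos h, h]
            congr 1
            exact Finset.sum_congr rfl fun k _ => by rw [show T₀ i k = T i k from if_pos rfl]
          · rw [Matrix.of_apply, if_neg h]
            rw [Finset.sum_eq_zero fun k _ => by rw [show T₀ r k = 0 from if_neg h, zero_mul],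
              add_zero]
        rw [hM₁eq] at hM₁P hM₁hom
        have hres := ih ((1 + T₀) * M) hM₁hom hM₁P T₁
          (by
            intro r k
            by_cases h : r = i
            · rw [show T₁ r k = 0 from if_pos h]; exact zero_mem _
            · rw [show T₁ r k = T r k from if_neg h]; exact hT r k)
          (fun r hr k => by
            by_cases h : r = i
            · exact if_pos h
            · rw [show T₁ r k = T r k from if_neg h]
              exact h1 r (by simp [h, hr]) k)
          (fun k hk r => by
            by_cases h : r = i
            · exact if_pos h
            · rw [show T₁ r k = T r k from if_neg h]
              exact h2 k (Finset.mem_insert_of_mem hk) r)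
        have hfinal : (1 + T₁) * ((1 + T₀) * M) = (1 + T) * M := by
          rw [← Matrix.mul_assoc]
          congr 1
          have hzero : T₁ * T₀ = 0 := by
            ext r c
            rw [Matrix.mul_apply, Matrix.zero_apply]
            refine Finset.sum_eq_zero fun l _ => ?_
            by_cases hl : l = i
            · rw [show T₀ l c = T i c from if_pos hl, hl]
              have hT1 : T₁ r i = 0 := by
                by_cases h : r = i
                · exact if_pos h
                · rw [show T₁ r i = T r i from if_neg h]
                  exact h2 i (Finset.mem_insert_self i J) r
              rw [hT1, zero_mul]
            · rw [show T₀ l c = 0 from if_neg hl, mul_zero]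
          have hsum : T₀ + T₁ = T := by
            ext r c
            by_cases h : r = i
            · rw [Matrix.add_apply, show T₀ r c = T i c from if_pos h,
                show T₁ r c = 0 from if_pos h, add_zero, h]
            · rw [Matrix.add_apply, show T₀ r c = 0 from if_neg h,
                show T₁ r c = T r c from if_neg h, zero_add]
          rw [Matrix.add_mul, Matrix.one_mul, Matrix.mul_add, Matrix.mul_one, hzero, add_zero,
            ← hsum]
          abel
        rw [hfinal] at hres
        exact hres

def FF {n n' m m' : ℕ} (X : Matrix (Fin n ⊕ Fin n') (Fin m ⊕ Fin m') R) :
    Matrix (Fin (n + n')) (Fin (m + m')) R :=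
  Matrix.reindex finSumFinEquiv finSumFinEquiv X

lemma FF_add {n n' m m' : ℕ} (X Y : Matrix (Fin n ⊕ Fin n') (Fin m ⊕ Fin m') R) :
    FF (X + Y) = FF X + FF Y := by
  ext i j
  rfl

lemma FF_one {n n' : ℕ} : FF (1 : Matrix (Fin n ⊕ Fin n') (Fin n ⊕ Fin n') R) = 1 := by
  simp [FF, Matrix.reindex_apply]

lemma FF_mul {n n' m m' k k' : ℕ} (X : Matrix (Fin n ⊕ Fin n') (Fin m ⊕ Fin m') R)
    (Y : Matrix (Fin m ⊕ Fin m') (Fin k ⊕ Fin k') R) :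
    FF X * FF Y = FF (X * Y) := by
  simp only [FF, Matrix.reindex_apply]
  exact Matrix.submatrix_mul_equiv X Y _ _ _

lemma FF_isHomog {n n' m m' : ℕ} (X : Matrix (Fin n ⊕ Fin n') (Fin m ⊕ Fin m') R)
    (u : Fin n ⊕ Fin n' → Γ) (v : Fin m ⊕ Fin m' → Γ)
    (h : ∀ s t, X s t ∈ 𝒜 (u s * (v t)⁻¹)) :
    IsHomog 𝒜 (FF X) (u ∘ finSumFinEquiv.symm) (v ∘ finSumFinEquiv.symm) :=
  fun i j => h _ _

lemma isHomog_one (hone : (1 : R) ∈ 𝒜 1) {k : ℕ} (γ : Fin k → Γ) :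
    IsHomog 𝒜 (1 : Matrix (Fin k) (Fin k) R) γ γ := by
  intro i j
  by_cases h : i = j
  · subst h
    rw [Matrix.one_apply_eq]
    exact mem_graded_congr hone (by rw [mul_inv_cancel])
  · rw [Matrix.one_apply_ne h]
    exact zero_mem _

lemma isHomog_neg_one (hone : (1 : R) ∈ 𝒜 1) {k : ℕ} (γ : Fin k → Γ) :
    IsHomog 𝒜 (-1 : Matrix (Fin k) (Fin k) R) γ γ := by
  intro i j
  rw [Matrix.neg_apply]
  exact neg_mem (isHomog_one hone γ i j)

lemma diagSum_one_one {a b : ℕ} :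
    diagSum (1 : Matrix (Fin a) (Fin a) R) (1 : Matrix (Fin b) (Fin b) R) = 1 := by
  unfold diagSum
  rw [Matrix.fromBlocks_one, Matrix.reindex_apply]
  exact Matrix.submatrix_one_equiv finSumFinEquiv.symm

lemma diagSum_neg {a b c d : ℕ} (X : Matrix (Fin a) (Fin b) R) (Y : Matrix (Fin c) (Fin d) R) :
    diagSum (-X) (-Y) = -(diagSum X Y) := by
  ext i j
  show (Matrix.fromBlocks (-X) 0 0 (-Y)) (finSumFinEquiv.symm i) (finSumFinEquiv.symm j)
      = -((Matrix.fromBlocks X 0 0 Y) (finSumFinEquiv.symm i) (finSumFinEquiv.symm j))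
  rcases finSumFinEquiv.symm i with s | s <;> rcases finSumFinEquiv.symm j with t | t <;> simp

lemma diagSum_neg_one {a b : ℕ} :
    diagSum (-1 : Matrix (Fin a) (Fin a) R) (-1 : Matrix (Fin b) (Fin b) R) = -1 := by
  rw [show (-1 : Matrix (Fin a) (Fin a) R) = -(1 : Matrix (Fin a) (Fin a) R) from rfl,
    show (-1 : Matrix (Fin b) (Fin b) R) = -(1 : Matrix (Fin b) (Fin b) R) from rfl,
    diagSum_neg, diagSum_one_one]

lemma id_not_mem (hP : IsGrPrimeMatrixIdeal 𝒜 P) (hone : (1 : R) ∈ 𝒜 1) :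
    ∀ n : ℕ, (⟨n, (1 : Matrix (Fin n) (Fin n) R)⟩ : SqMat R) ∉ P := by
  intro n
  induction n with
  | zero =>
      intro h
      have h2 := hP.pm3 _ (1 : Matrix (Fin 1) (Fin 1) R) h
        ⟨fun _ => 1, fun _ => 1, isHomog_one hone _⟩
      rw [diagSum_one_one] at h2
      exact hP.pm5 h2
  | succ m ih =>
      intro h
      have h' : (⟨m + 1, diagSum (1 : Matrix (Fin m) (Fin m) R) (1 : Matrix (Fin 1) (Fin 1) R)⟩
          : SqMat R) ∈ P := by
        rw [diagSum_one_one]; exact h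
      rcases hP.pm4 _ _ ⟨fun _ => 1, fun _ => 1, isHomog_one hone _⟩
        ⟨fun _ => 1, fun _ => 1, isHomog_one hone _⟩ h' with h1 | h1
      · exact ih h1
      · exact hP.pm5 h1

lemma neg_one_reduce (hP : IsGrPrimeMatrixIdeal 𝒜 P) (hone : (1 : R) ∈ 𝒜 1) :
    ∀ n : ℕ, (⟨n, (-1 : Matrix (Fin n) (Fin n) R)⟩ : SqMat R) ∈ P →
      (⟨1, (-1 : Matrix (Fin 1) (Fin 1) R)⟩ : SqMat R) ∈ P := by
  intro n
  induction n with
  | zero =>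
      intro h
      have : (-1 : Matrix (Fin 0) (Fin 0) R) = 1 := by
        ext i; exact i.elim0
      rw [this] at h
      exact absurd h (id_not_mem hP hone 0)
  | succ m ih =>
      intro h
      have h' : (⟨m + 1, diagSum (-1 : Matrix (Fin m) (Fin m) R) (-1 : Matrix (Fin 1) (Fin 1) R)⟩
          : SqMat R) ∈ P := by
        rw [diagSum_neg_one]; exact h
      rcases hP.pm4 _ _ ⟨fun _ => 1, fun _ => 1, isHomog_neg_one hone _⟩
        ⟨fun _ => 1, fun _ => 1, isHomog_neg_one hone _⟩ h' with h1 | h1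
      · exact ih h1
      · exact h1

lemma neg_one_not_mem (hP : IsGrPrimeMatrixIdeal 𝒜 P) (hone : (1 : R) ∈ 𝒜 1)
    (hmul : ∀ {γ δ : Γ} {x y : R}, x ∈ 𝒜 γ → y ∈ 𝒜 δ → x * y ∈ 𝒜 (γ * δ)) :
    (⟨1, (-1 : Matrix (Fin 1) (Fin 1) R)⟩ : SqMat R) ∉ P := by
  intro h
  have h2 : (⟨1 + 1, (-1 : Matrix (Fin (1+1)) (Fin (1+1)) R)⟩ : SqMat R) ∈ P := by
    have := hP.pm3 _ (-1 : Matrix (Fin 1) (Fin 1) R) h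
      ⟨fun _ => 1, fun _ => 1, isHomog_neg_one hone _⟩
    rw [diagSum_neg_one] at this
    exact this
  have hdeg : (1 : Γ) = 1 * (1 : Γ)⁻¹ := by group
  have h2m : (2 : R) ∈ 𝒜 1 := by
    rw [show (2 : R) = 1 + 1 from one_add_one_eq_two.symm]
    exact add_mem hone hone
  set u : Fin (1+1) → Γ := fun _ => 1 with hu
  have hdeg2 : ∀ a b : Fin (1+1), (1 : Γ) = u a * (u b)⁻¹ := by
    intro a b; rw [hu]; group
  have hM0hom : IsHomog 𝒜 (-1 : Matrix (Fin (1+1)) (Fin (1+1)) R) u u := isHomog_neg_one hone u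
  have hlamall : ∀ (v : Fin (1+1) → R), (∀ k, v k ∈ 𝒜 1) →
      ∀ j k : Fin (1+1), v k ∈ 𝒜 (u k * (u j)⁻¹) :=
    fun v hv j k => mem_graded_congr (hv k) (hdeg2 k j)
  have hv1 : ∀ k : Fin (1+1), (![0, 1] : Fin (1+1) → R) k ∈ 𝒜 1 := by
    intro k
    fin_cases k
    · exact zero_mem _
    · exact hone
  have hv2 : ∀ k : Fin (1+1), (![-1, 0] : Fin (1+1) → R) k ∈ 𝒜 1 := by
    intro k
    fin_cases k
    · exact neg_mem hone
    · exact zero_mem _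
  have hv3 : ∀ k : Fin (1+1), (![0, 2] : Fin (1+1) → R) k ∈ 𝒜 1 := by
    intro k
    fin_cases k
    · exact zero_mem _
    · exact h2m
  -- op 1 : col0 += col1 * 1
  obtain ⟨hP1, hH1⟩ := colStep hP hone hmul (-1 : Matrix (Fin (1+1)) (Fin (1+1)) R) u u
    hM0hom h2 0 ![0, 1]
    (hlamall _ hv1 0)
    (by simp)
  have e1 : (Matrix.of fun i c => if c = 0 then (-1 : Matrix (Fin (1+1)) (Fin (1+1)) R) i c
      + ∑ k, (-1 : Matrix (Fin (1+1)) (Fin (1+1)) R) i k * ![0, 1] k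
      else (-1 : Matrix (Fin (1+1)) (Fin (1+1)) R) i c)
      = !![-1, 0; -1, -1] := by
    ext i c
    fin_cases i <;> fin_cases c <;>
      simp [Fin.sum_univ_two, Matrix.one_apply, Matrix.neg_apply]
  rw [e1] at hP1 hH1
  -- op 2 : col1 += col0 * (-1)
  obtain ⟨hP2, hH2⟩ := colStep hP hone hmul !![-1, 0; -1, -1] u u hH1 hP1 1 ![-1, 0]
    (hlamall _ hv2 1)
    (by simp)
  have e2 : (Matrix.of fun i c => if c = 1 then (!![-1, 0; -1, -1] : Matrix (Fin (1+1)) (Fin (1+1)) R) i c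
      + ∑ k, (!![-1, 0; -1, -1] : Matrix (Fin (1+1)) (Fin (1+1)) R) i k * ![-1, 0] k
      else (!![-1, 0; -1, -1] : Matrix (Fin (1+1)) (Fin (1+1)) R) i c)
      = !![-1, 1; -1, 0] := by
    ext i c
    fin_cases i <;> fin_cases c <;> simp [Fin.sum_univ_two]
  rw [e2] at hP2 hH2
  -- op 3 : col0 += col1 * 2
  obtain ⟨hP3, hH3⟩ := colStep hP hone hmul !![-1, 1; -1, 0] u u hH2 hP2 0 ![0, 2]
    (hlamall _ hv3 0)
    (by simp)
  have e3 : (Matrix.of fun i c => if c = 0 then (!![-1, 1; -1, 0] : Matrix (Fin (1+1)) (Fin (1+1)) R) i c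
      + ∑ k, (!![-1, 1; -1, 0] : Matrix (Fin (1+1)) (Fin (1+1)) R) i k * ![0, 2] k
      else (!![-1, 1; -1, 0] : Matrix (Fin (1+1)) (Fin (1+1)) R) i c)
      = !![1, 1; -1, 0] := by
    ext i c
    fin_cases i <;> fin_cases c <;> norm_num [Fin.sum_univ_two]
  rw [e3] at hP3 hH3
  -- op 4 : col1 += col0 * (-1)
  obtain ⟨hP4, hH4⟩ := colStep hP hone hmul !![1, 1; -1, 0] u u hH3 hP3 1 ![-1, 0]
    (hlamall _ hv2 1)
    (by simp)
  have e4 : (Matrix.of fun i c => if c = 1 then (!![1, 1; -1, 0] : Matrix (Fin (1+1)) (Fin (1+1)) R) i c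
      + ∑ k, (!![1, 1; -1, 0] : Matrix (Fin (1+1)) (Fin (1+1)) R) i k * ![-1, 0] k
      else (!![1, 1; -1, 0] : Matrix (Fin (1+1)) (Fin (1+1)) R) i c)
      = !![1, 0; -1, 1] := by
    ext i c
    fin_cases i <;> fin_cases c <;> norm_num [Fin.sum_univ_two]
  rw [e4] at hP4 hH4
  -- op 5 : col0 += col1 * 1
  obtain ⟨hP5, hH5⟩ := colStep hP hone hmul !![1, 0; -1, 1] u u hH4 hP4 0 ![0, 1]
    (hlamall _ hv1 0)
    (by simp)
  have e5 : (Matrix.of fun i c => if c = 0 then (!![1, 0; -1, 1] : Matrix (Fin (1+1)) (Fin (1+1)) R) i c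
      + ∑ k, (!![1, 0; -1, 1] : Matrix (Fin (1+1)) (Fin (1+1)) R) i k * ![0, 1] k
      else (!![1, 0; -1, 1] : Matrix (Fin (1+1)) (Fin (1+1)) R) i c)
      = (1 : Matrix (Fin (1+1)) (Fin (1+1)) R) := by
    ext i c
    fin_cases i <;> fin_cases c <;> norm_num [Fin.sum_univ_two, Matrix.one_apply]
  rw [e5] at hP5
  exact id_not_mem hP hone _ hP5

lemma unit_chain (hP : IsGrPrimeMatrixIdeal 𝒜 P) (hone : (1 : R) ∈ 𝒜 1)
    (hmul : ∀ {γ δ : Γ} {x y : R}, x ∈ 𝒜 γ → y ∈ 𝒜 δ → x * y ∈ 𝒜 (γ * δ))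
    {n : ℕ} (A B : Matrix (Fin n) (Fin n) R) (α β : Fin n → Γ)
    (hA : IsHomog 𝒜 A α β) (hB : IsHomog 𝒜 B β α)
    (hAB : A * B = 1) (hBA : B * A = 1)
    (hAP : (⟨n, A⟩ : SqMat R) ∈ P) : False := by
  classical
  set e := (finSumFinEquiv : Fin n ⊕ Fin n ≃ Fin (n + n)) with he
  set ρ : Fin (n + n) → Γ := Sum.elim α β ∘ e.symm with hρ
  set χ : Fin (n + n) → Γ := Sum.elim β α ∘ e.symm with hχ
  set JL : Finset (Fin (n + n)) := Finset.univ.filter (fun j => (e.symm j).isLeft) with hJL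
  set JR : Finset (Fin (n + n)) := Finset.univ.filter (fun j => (e.symm j).isRight) with hJR
  have hmemJR : ∀ j : Fin (n + n), j ∈ JR ↔ ∃ y, e.symm j = Sum.inr y := by
    intro j
    rw [hJR, Finset.mem_filter]
    simp [Sum.isRight_iff]
  have hmemJL : ∀ j : Fin (n + n), j ∈ JL ↔ ∃ y, e.symm j = Sum.inl y := by
    intro j
    rw [hJL, Finset.mem_filter]
    simp [Sum.isLeft_iff]
  have hM0P : (⟨n + n, diagSum A B⟩ : SqMat R) ∈ P := hP.pm3 A B hAP ⟨β, α, hB⟩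
  have hM0hom : IsHomog 𝒜 (diagSum A B) ρ χ := by
    refine FF_isHomog _ (Sum.elim α β) (Sum.elim β α) ?_
    rintro (s | s) (t | t)
    · simpa using hA s t
    · simpa using zero_mem _
    · simpa using zero_mem _
    · simpa using hB s t
  -- Step 1: columns of right block += columns of left block * B
  obtain ⟨hP1, hH1⟩ := colOps hP hone hmul JR (diagSum A B) ρ χ hM0hom hM0P
    (FF (Matrix.fromBlocks (0 : Matrix (Fin n) (Fin n) R) B (0 : Matrix (Fin n) (Fin n) R) 0))
    (by
      intro k c
      obtain ⟨s, rfl⟩ := e.surjective k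
      obtain ⟨t, rfl⟩ := e.surjective c
      show (Matrix.fromBlocks (0 : Matrix (Fin n) (Fin n) R) B (0 : Matrix (Fin n) (Fin n) R) 0) (e.symm (e s)) (e.symm (e t))
        ∈ 𝒜 (χ (e s) * (χ (e t))⁻¹)
      simp only [hχ, Function.comp_apply, Equiv.symm_apply_apply]
      rcases s with s | s <;> rcases t with t | t
      · simpa using zero_mem _
      · simpa using hB s t
      · simpa using zero_mem _
      · simpa using zero_mem _)
    (by
      intro k hk c
      obtain ⟨y, hy⟩ := (hmemJR k).mp hk
      show (Matrix.fromBlocks (0 : Matrix (Fin n) (Fin n) R) B (0 : Matrix (Fin n) (Fin n) R) 0) (e.symm k) (e.symm c) = 0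
      rw [hy]
      rcases e.symm c with t | t <;> simp)
    (by
      intro c hc k
      rcases hsc : e.symm c with t | t
      · show (Matrix.fromBlocks (0 : Matrix (Fin n) (Fin n) R) B (0 : Matrix (Fin n) (Fin n) R) 0) (e.symm k) (e.symm c) = 0
        rw [hsc]
        rcases e.symm k with s | s <;> simp
      · exact absurd ((hmemJR c).mpr ⟨t, hsc⟩) hc)
  have heq1 : diagSum A B * (1 + FF (Matrix.fromBlocks (0 : Matrix (Fin n) (Fin n) R) B (0 : Matrix (Fin n) (Fin n) R) 0))
      = FF (Matrix.fromBlocks A (1 : Matrix (Fin n) (Fin n) R) (0 : Matrix (Fin n) (Fin n) R) B) := by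
    rw [show diagSum A B = FF (Matrix.fromBlocks A 0 0 B) from rfl,
      show (1 : Matrix (Fin (n+n)) (Fin (n+n)) R) = FF (1 : Matrix (Fin n ⊕ Fin n) (Fin n ⊕ Fin n) R) from (FF_one (R := R) (n := n) (n' := n)).symm,
      ← FF_add, FF_mul]
    congr 1
    rw [show (1 : Matrix (Fin n ⊕ Fin n) (Fin n ⊕ Fin n) R) = Matrix.fromBlocks 1 0 0 1 from
      Matrix.fromBlocks_one.symm, Matrix.fromBlocks_add, Matrix.fromBlocks_multiply]
    congr 1 <;> simp [hAB]
  rw [heq1] at hP1 hH1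
  -- Step 2: rows of bottom block += (-B) * rows of top block
  obtain ⟨hP2, hH2⟩ := rowOps hP hone hmul JR (FF (Matrix.fromBlocks A (1 : Matrix (Fin n) (Fin n) R) (0 : Matrix (Fin n) (Fin n) R) B)) ρ χ hH1 hP1
    (FF (Matrix.fromBlocks (0 : Matrix (Fin n) (Fin n) R) (0 : Matrix (Fin n) (Fin n) R) (-B) 0))
    (by
      intro k c
      obtain ⟨s, rfl⟩ := e.surjective k
      obtain ⟨t, rfl⟩ := e.surjective c
      show (Matrix.fromBlocks (0 : Matrix (Fin n) (Fin n) R) (0 : Matrix (Fin n) (Fin n) R) (-B) 0) (e.symm (e s)) (e.symm (e t))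
        ∈ 𝒜 (ρ (e s) * (ρ (e t))⁻¹)
      simp only [hρ, Function.comp_apply, Equiv.symm_apply_apply]
      rcases s with s | s <;> rcases t with t | t
      · simpa using zero_mem _
      · simpa using zero_mem _
      · simpa using neg_mem (hB s t)
      · simpa using zero_mem _)
    (by
      intro r hr k
      rcases hsr : e.symm r with s | s
      · show (Matrix.fromBlocks (0 : Matrix (Fin n) (Fin n) R) (0 : Matrix (Fin n) (Fin n) R) (-B) 0) (e.symm r) (e.symm k) = 0
        rw [hsr]
        rcases e.symm k with t | t <;> simp
      · exact absurd ((hmemJR r).mpr ⟨s, hsr⟩) hr)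
    (by
      intro k hk r
      obtain ⟨y, hy⟩ := (hmemJR k).mp hk
      show (Matrix.fromBlocks (0 : Matrix (Fin n) (Fin n) R) (0 : Matrix (Fin n) (Fin n) R) (-B) 0) (e.symm r) (e.symm k) = 0
      rw [hy]
      rcases e.symm r with s | s <;> simp)
  have heq2 : (1 + FF (Matrix.fromBlocks (0 : Matrix (Fin n) (Fin n) R) (0 : Matrix (Fin n) (Fin n) R) (-B) 0)) * FF (Matrix.fromBlocks A (1 : Matrix (Fin n) (Fin n) R) (0 : Matrix (Fin n) (Fin n) R) B)
      = FF (Matrix.fromBlocks A (1 : Matrix (Fin n) (Fin n) R) (-1) (0 : Matrix (Fin n) (Fin n) R)) := by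
    rw [show (1 : Matrix (Fin (n+n)) (Fin (n+n)) R) = FF (1 : Matrix (Fin n ⊕ Fin n) (Fin n ⊕ Fin n) R) from (FF_one (R := R) (n := n) (n' := n)).symm,
      ← FF_add, FF_mul]
    congr 1
    rw [show (1 : Matrix (Fin n ⊕ Fin n) (Fin n ⊕ Fin n) R) = Matrix.fromBlocks 1 0 0 1 from
      Matrix.fromBlocks_one.symm, Matrix.fromBlocks_add, Matrix.fromBlocks_multiply]
    congr 1 <;> simp [hBA, Matrix.neg_mul]
  rw [heq2] at hP2 hH2
  -- Step 3: columns of left block += columns of right block * (-A)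
  obtain ⟨hP3, hH3⟩ := colOps hP hone hmul JL (FF (Matrix.fromBlocks A (1 : Matrix (Fin n) (Fin n) R) (-1) (0 : Matrix (Fin n) (Fin n) R))) ρ χ hH2 hP2
    (FF (Matrix.fromBlocks (0 : Matrix (Fin n) (Fin n) R) (0 : Matrix (Fin n) (Fin n) R) (-A) 0))
    (by
      intro k c
      obtain ⟨s, rfl⟩ := e.surjective k
      obtain ⟨t, rfl⟩ := e.surjective c
      show (Matrix.fromBlocks (0 : Matrix (Fin n) (Fin n) R) (0 : Matrix (Fin n) (Fin n) R) (-A) 0) (e.symm (e s)) (e.symm (e t))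
        ∈ 𝒜 (χ (e s) * (χ (e t))⁻¹)
      simp only [hχ, Function.comp_apply, Equiv.symm_apply_apply]
      rcases s with s | s <;> rcases t with t | t
      · simpa using zero_mem _
      · simpa using zero_mem _
      · simpa using neg_mem (hA s t)
      · simpa using zero_mem _)
    (by
      intro k hk c
      obtain ⟨y, hy⟩ := (hmemJL k).mp hk
      show (Matrix.fromBlocks (0 : Matrix (Fin n) (Fin n) R) (0 : Matrix (Fin n) (Fin n) R) (-A) 0) (e.symm k) (e.symm c) = 0
      rw [hy]
      rcases e.symm c with t | t <;> simp)
    (by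
      intro c hc k
      rcases hsc : e.symm c with t | t
      · exact absurd ((hmemJL c).mpr ⟨t, hsc⟩) hc
      · show (Matrix.fromBlocks (0 : Matrix (Fin n) (Fin n) R) (0 : Matrix (Fin n) (Fin n) R) (-A) 0) (e.symm k) (e.symm c) = 0
        rw [hsc]
        rcases e.symm k with s | s <;> simp)
  have heq3 : FF (Matrix.fromBlocks A (1 : Matrix (Fin n) (Fin n) R) (-1) (0 : Matrix (Fin n) (Fin n) R)) * (1 + FF (Matrix.fromBlocks (0 : Matrix (Fin n) (Fin n) R) (0 : Matrix (Fin n) (Fin n) R) (-A) 0))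
      = FF (Matrix.fromBlocks (0 : Matrix (Fin n) (Fin n) R) (1 : Matrix (Fin n) (Fin n) R) (-1) (0 : Matrix (Fin n) (Fin n) R)) := by
    rw [show (1 : Matrix (Fin (n+n)) (Fin (n+n)) R) = FF (1 : Matrix (Fin n ⊕ Fin n) (Fin n ⊕ Fin n) R) from (FF_one (R := R) (n := n) (n' := n)).symm,
      ← FF_add, FF_mul]
    congr 1
    rw [show (1 : Matrix (Fin n ⊕ Fin n) (Fin n ⊕ Fin n) R) = Matrix.fromBlocks 1 0 0 1 from
      Matrix.fromBlocks_one.symm, Matrix.fromBlocks_add, Matrix.fromBlocks_multiply]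
    congr 1 <;> simp
  rw [heq3] at hP3
  -- Step 4: permute the two column blocks
  set f : Equiv.Perm (Fin (n + n)) := (e.symm.trans (Equiv.sumComm (Fin n) (Fin n))).trans e
    with hf
  have hperm := hP.pm6 _ (Equiv.refl _) f hP3
  have heq4 : (FF (Matrix.fromBlocks (0 : Matrix (Fin n) (Fin n) R) (1 : Matrix (Fin n) (Fin n) R) (-1) (0 : Matrix (Fin n) (Fin n) R))).submatrix (⇑(Equiv.refl (Fin (n+n)))) ⇑f
      = diagSum (1 : Matrix (Fin n) (Fin n) R) (-1 : Matrix (Fin n) (Fin n) R) := by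
    ext i j
    obtain ⟨s, rfl⟩ := e.surjective i
    obtain ⟨t, rfl⟩ := e.surjective j
    show (Matrix.fromBlocks (0 : Matrix (Fin n) (Fin n) R) (1 : Matrix (Fin n) (Fin n) R) (-1) (0 : Matrix (Fin n) (Fin n) R)) (e.symm (e s)) (e.symm (f (e t)))
        = (Matrix.fromBlocks (1 : Matrix (Fin n) (Fin n) R) 0 0 (-1)) (e.symm (e s)) (e.symm (e t))
    have hft : f (e t) = e ((Equiv.sumComm (Fin n) (Fin n)) t) := by
      rw [hf]
      simp
    rw [hft, Equiv.symm_apply_apply, Equiv.symm_apply_apply, Equiv.symm_apply_apply]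
    rcases s with s | s <;> rcases t with t | t <;> simp
  rw [heq4] at hperm
  rcases hP.pm4 _ _ ⟨α, α, isHomog_one hone α⟩ ⟨β, β, isHomog_neg_one hone β⟩ hperm with hc | hc
  · exact id_not_mem hP hone n hc
  · exact neg_one_not_mem hP hone hmul (neg_one_reduce hP hone n hc)


end Aux

/-- Let `𝒫` be a gr-prime matrix ideal of the `Γ`-graded ring `R`.
Then no invertible homogeneous square matrix belongs to `𝒫`; in particular no
identity matrix belongs to `𝒫`. -/
theorem grPrime_not_mem_of_isUnit
    {Γ : Type u} [Group Γ] [DecidableEq Γ] {R : Type v} [Ring R]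
    (𝒜 : Γ → AddSubgroup R)
    (hinternal : DirectSum.IsInternal 𝒜)
    (hone : (1 : R) ∈ 𝒜 1)
    (hmul : ∀ {γ δ : Γ} {x y : R}, x ∈ 𝒜 γ → y ∈ 𝒜 δ → x * y ∈ 𝒜 (γ * δ))
    (P : Set (SqMat R)) (hP : IsGrPrimeMatrixIdeal 𝒜 P) :
    (∀ {n : ℕ} (A : Matrix (Fin n) (Fin n) R),
        IsHomogSq 𝒜 A → IsUnit A → (⟨n, A⟩ : SqMat R) ∉ P) ∧
    (∀ n : ℕ, (⟨n, (1 : Matrix (Fin n) (Fin n) R)⟩ : SqMat R) ∉ P) := by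
  refine ⟨?_, id_not_mem hP hone⟩
  intro n A hA hU hmem
  obtain ⟨α, β, hhom⟩ := hA
  obtain ⟨B, hB, hAB, hBA⟩ := exists_homog_inv hinternal hone hmul hhom hU
  exact unit_chain hP hone hmul A B α β hhom hB hAB hBA hmem
end
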